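/- arXiv:math/0012230 — 2 statements merged into one kernel-verified Lean document; each statement's English description precedes it below -/
import Mathlib

section
/- Let S(x,y;t) be the element of R[[t]], where R = ℤ[x,x⁻¹,y,y⁻¹], whose coefficient of tⁿ is ∑_{(i,j)∈ℤ²} a_{i,j}(n) x^i y^j for walks with diagonal steps. Let R₁₆ be the unique formal power series in ℚ[[t]] with constant term 1 satisfying R₁₆² = 1−16t². Then, in R⊗ℚ[[t]], one has 2·((1 − t(x+x⁻¹)(y+y⁻¹)) · S(x,y;t))² = 1 − 8t²(1 + x⁻²) + R₁₆. (Equivalently, S(x,y;t) = (1 − 8t²(1+x⁻²) + √(1−16t²))^{1/2} / (√2 · (1 − t(x+x⁻¹)(y+y⁻¹))).) -/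
open Filter PowerSeries

/-- The forbidden half-line `H = {(k,0) : k ≤ 0}`. -/
def slitH : Set (ℤ × ℤ) := {p : ℤ × ℤ | p.2 = 0 ∧ p.1 ≤ 0}

/-- The four diagonal steps. -/
def diagSteps : Set (ℤ × ℤ) := {(1,1), (1,-1), (-1,1), (-1,-1)}

/-- `w : Fin (n+1) → ℤ × ℤ` is a walk on the slit plane with steps in `A`. -/
def IsSlitWalk (A : Set (ℤ × ℤ)) (n : ℕ) (w : Fin (n+1) → ℤ × ℤ) : Prop :=
  w 0 = (0,0) ∧ (∀ m : Fin n, w m.succ - w m.castSucc ∈ A) ∧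
    ∀ m : Fin (n+1), 1 ≤ (m : ℕ) → w m ∉ slitH

/-- `a_{i,j}(n)`: the number of walks on the slit plane of length `n` ending at `(i,j)`. -/
noncomputable def slitCount (A : Set (ℤ × ℤ)) (i j : ℤ) (n : ℕ) : ℕ :=
  Nat.card {w : Fin (n+1) → ℤ × ℤ // IsSlitWalk A n w ∧ w (Fin.last n) = (i, j)}

open Finset Nat

section SqrtMachine

variable {L : Type*} [CommRing L] [Algebra ℚ L]

noncomputable def sqC (F : PowerSeries L) : ℕ → L
  | 0 => 1
  | n+1 => (2⁻¹ : ℚ) • ((PowerSeries.coeff (R := L) (n+1)) F -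
      ∑ i ∈ (Finset.range n).attach, sqC F (i.1+1) * sqC F (n - i.1))
  decreasing_by
  · exact Nat.succ_lt_succ (Finset.mem_range.mp i.2)
  · omega

noncomputable def sqS (F : PowerSeries L) : PowerSeries L := PowerSeries.mk (sqC F)

lemma sqC_zero (F : PowerSeries L) : sqC F 0 = 1 := by rw [sqC]

lemma sqC_succ (F : PowerSeries L) (n : ℕ) :
    sqC F (n+1) = (2⁻¹ : ℚ) • ((PowerSeries.coeff (R := L) (n+1)) F -
      ∑ i ∈ Finset.range n, sqC F (i+1) * sqC F (n - i)) := by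
  rw [sqC, Finset.sum_attach (Finset.range n) (fun i => sqC F (i+1) * sqC F (n - i))]

lemma sqS_sq (F : PowerSeries L) (hF : constantCoeff (R := L) F = 1) : (sqS F) * (sqS F) = F := by
  ext n
  rw [PowerSeries.coeff_mul]
  rw [Finset.Nat.sum_antidiagonal_eq_sum_range_succ_mk]
  cases n with
  | zero =>
      simp [sqS, sqC_zero]
      rw [← PowerSeries.coeff_zero_eq_constantCoeff_apply] at hF
      simpa using hF.symm
  | succ n =>
      have h1 : ∀ k, (coeff (R := L) k) (sqS F) = sqC F k := fun k => PowerSeries.coeff_mk k _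
      simp only [h1]
      rw [Finset.sum_range_succ, Finset.sum_range_succ']
      simp only [Nat.sub_zero, Nat.sub_self, sqC_zero, one_mul, mul_one]
      have h2 : ∀ i ∈ Finset.range n, sqC F (i+1) * sqC F (n+1 - (i+1))
          = sqC F (i+1) * sqC F (n - i) := by
        intro i hi
        have h3 : n + 1 - (i + 1) = n - i := by omega
        rw [h3]
      rw [Finset.sum_congr rfl h2]
      rw [sqC_succ]
      set M := ∑ i ∈ Finset.range n, sqC F (i+1) * sqC F (n - i) with hM
      have : (2:ℚ) • ((2⁻¹ : ℚ) • ((PowerSeries.coeff (R := L) (n+1)) F - M))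
          = (PowerSeries.coeff (R := L) (n+1)) F - M := by
        rw [smul_smul]; norm_num
      rw [two_smul] at this
      linear_combination (norm := abel) this

lemma sqC_mem (F : PowerSeries L) (M : Submodule ℚ L)
    (hmul : ∀ a ∈ M, ∀ b ∈ M, a * b ∈ M)
    (hF : ∀ n, 1 ≤ n → (PowerSeries.coeff (R := L) n) F ∈ M) :
    ∀ n, 1 ≤ n → sqC F n ∈ M := by
  intro n
  induction n using Nat.strong_induction_on with
  | _ n ih =>
    intro hn
    obtain ⟨m, rfl⟩ : ∃ m, n = m + 1 := ⟨n - 1, by omega⟩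
    rw [sqC_succ]
    refine Submodule.smul_mem _ _ (Submodule.sub_mem _ (hF _ (by omega)) ?_)
    refine Submodule.sum_mem _ (fun i hi => ?_)
    have hi' := Finset.mem_range.mp hi
    exact hmul _ (ih (i+1) (by omega) (by omega)) _ (ih (m - i) (by omega) (by omega))

end SqrtMachine

section QSide
variable (R16 : PowerSeries ℚ)

noncomputable def rhoS : PowerSeries ℚ := PowerSeries.mk fun n => -((coeff (R := ℚ) (n+1)) R16)/4

noncomputable def Aq : PowerSeries ℚ := C (R := ℚ) (1/2) * (1 - 8*X^2 + R16)

variable (hR0 : constantCoeff (R := ℚ) R16 = 1) (hR : R16 ^ 2 = 1 - 16 * X ^ 2)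

include hR0 in
lemma hrho : 4 * (X * rhoS R16) = 1 - R16 := by
  ext n
  cases n with
  | zero =>
      simp only [coeff_zero_eq_constantCoeff, map_mul, map_sub, map_one]
      simp [constantCoeff_X, hR0]
  | succ n =>
      have h4 : (4 : ℚ⟦X⟧) = C (R := ℚ) 4 := by rw [map_ofNat]
      rw [h4, coeff_C_mul, coeff_succ_X_mul, map_sub, rhoS, coeff_mk]
      have : (coeff (R := ℚ) (n+1)) (1 : ℚ⟦X⟧) = 0 := by
        rw [coeff_one]; simp
      rw [this]
      ring

include hR0 hR in
lemma E1 : 16 * X^2 * (rhoS R16)^2 = 2 - 2*R16 - 16*X^2 := by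
  have h := hrho R16 hR0
  have hsq : (4 * (X * rhoS R16))^2 = (1 - R16)^2 := by rw [h]
  have : 16 * X^2 * (rhoS R16)^2 = (1-R16)^2 := by linear_combination hsq
  rw [this]
  linear_combination hR

lemma hA2 : 2 * Aq R16 = 1 - 8*X^2 + R16 := by
  have h : (2 : ℚ⟦X⟧) * C (R := ℚ) (1/2) = 1 := by
    rw [show (2 : ℚ⟦X⟧) = C (R := ℚ) 2 by rw [map_ofNat], ← map_mul]; norm_num
  rw [Aq, ← mul_assoc, h, one_mul]

lemma c32X2_ne : (32:ℚ⟦X⟧)*X^2 ≠ 0 := by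
  apply mul_ne_zero
  · intro h
    have := congrArg (constantCoeff (R := ℚ)) h
    rw [map_ofNat, map_zero] at this
    norm_num at this
  · exact pow_ne_zero _ X_ne_zero

include hR0 hR in
lemma AI3 : Aq R16 * (rhoS R16)^2 = 4*X^2 := by
  have key : (2*Aq R16)*(16*X^2*(rhoS R16)^2) = 128*X^4 := by
    rw [hA2, E1 R16 hR0 hR]
    linear_combination (-2 : ℚ⟦X⟧)*hR
  apply mul_left_cancel₀ c32X2_ne
  linear_combination key

include hR0 hR in
lemma AI4 : Aq R16 + 4*X^2*(rhoS R16)^2 = 1 - 8*X^2 := by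
  have h4 : (4:ℚ⟦X⟧) ≠ 0 := by
    intro h
    have := congrArg (constantCoeff (R := ℚ)) h
    rw [map_ofNat, map_zero] at this
    norm_num at this
  apply mul_left_cancel₀ h4
  have e1 := E1 R16 hR0 hR
  have a2 := hA2 R16
  linear_combination 2*a2 + e1

include hR0 hR in
lemma r1_zero : (coeff (R := ℚ) 1) R16 = 0 := by
  have h1 := congrArg (coeff (R := ℚ) 1) hR
  rw [sq, coeff_mul, Finset.Nat.sum_antidiagonal_eq_sum_range_succ_mk] at h1
  have h2 : (coeff (R := ℚ) 0) R16 = 1 := by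
    rw [coeff_zero_eq_constantCoeff_apply]; exact hR0
  rw [show (16:ℚ⟦X⟧) = C (R := ℚ) 16 by rw [map_ofNat]] at h1
  simp [Finset.sum_range_succ, h2, coeff_one, coeff_X_pow, coeff_C_mul] at h1
  linarith

omit hR0 hR in
lemma rho0 (h1 : (coeff (R := ℚ) 1) R16 = 0) : constantCoeff (R := ℚ) (rhoS R16) = 0 := by
  rw [← coeff_zero_eq_constantCoeff_apply, rhoS, coeff_mk, h1]
  norm_num

end QSide

section NatIdentity

def sN (m : ℕ) : ℕ := ∑ k ∈ range (m+1), centralBinom k * centralBinom (m-k)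
private def tN (m : ℕ) : ℕ := ∑ k ∈ range (m+1), k * (centralBinom k * centralBinom (m-k))

private lemma two_tN (m : ℕ) : 2 * tN m = m * sN m := by
  have hrefl : tN m = ∑ k ∈ range (m+1), (m-k) * (centralBinom (m-k) * centralBinom k) := by
    rw [tN, ← Finset.sum_range_reflect (fun k => k * (centralBinom k * centralBinom (m-k))) (m+1)]
    apply Finset.sum_congr rfl
    intro k hk
    have hk' := Finset.mem_range.mp hk
    have h1 : m + 1 - 1 - k = m - k := by omega
    have h2 : m - (m - k) = k := by omega
    rw [h1, h2]
  rw [two_mul]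
  nth_rewrite 2 [hrefl]
  rw [tN, ← Finset.sum_add_distrib, sN, Finset.mul_sum]
  apply Finset.sum_congr rfl
  intro k hk
  have hk' := Finset.mem_range.mp hk
  have h3 : centralBinom (m-k) * centralBinom k = centralBinom k * centralBinom (m-k) :=
    mul_comm _ _
  rw [h3, ← add_mul]
  congr 1
  omega

private lemma tN_succ (m : ℕ) : tN (m+1) = 4 * tN m + 2 * sN m := by
  rw [tN, Finset.sum_range_succ']
  simp only [Nat.zero_mul, add_zero]
  have h : ∀ k ∈ range (m+1), (k+1) * (centralBinom (k+1) * centralBinom (m+1-(k+1)))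
      = 4 * (k * (centralBinom k * centralBinom (m-k))) + 2 * (centralBinom k * centralBinom (m-k)) := by
    intro k hk
    have h1 : m + 1 - (k+1) = m - k := by omega
    rw [h1, ← mul_assoc, Nat.succ_mul_centralBinom_succ]
    ring
  rw [Finset.sum_congr rfl h, Finset.sum_add_distrib, ← Finset.mul_sum, ← Finset.mul_sum]
  rw [← tN, ← sN]

lemma sN_succ (m : ℕ) : sN (m+1) = 4 * sN m := by
  apply Nat.eq_of_mul_eq_mul_left (show 0 < m+1 by omega)
  have h1 : (m+1) * sN (m+1) = 2 * tN (m+1) := (two_tN (m+1)).symm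
  rw [h1, tN_succ]
  have h2 := two_tN m
  calc 2 * (4 * tN m + 2 * sN m) = 4 * (2 * tN m) + 4 * sN m := by ring
    _ = 4 * (m * sN m) + 4 * sN m := by rw [h2]
    _ = (m+1) * (4 * sN m) := by ring

lemma sN_eq (m : ℕ) : sN m = 4 ^ m := by
  induction m with
  | zero => simp [sN, Nat.centralBinom]
  | succ m ih => rw [sN_succ, ih]; ring

end NatIdentity

abbrev Lam : Type := AddMonoidAlgebra ℚ ℤ

noncomputable def zel : Lam := AddMonoidAlgebra.single 1 1 + AddMonoidAlgebra.single (-1) 1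

lemma zel_pow (n : ℕ) : zel ^ n
    = ∑ k ∈ range (n+1), AddMonoidAlgebra.single (2*(k:ℤ) - (n:ℤ)) ((n.choose k : ℚ)) := by
  rw [zel, (Commute.all _ _).add_pow]
  apply Finset.sum_congr rfl
  intro k hk
  have hk' : k ≤ n := by have := Finset.mem_range.mp hk; omega
  rw [AddMonoidAlgebra.single_pow, AddMonoidAlgebra.single_pow,
    AddMonoidAlgebra.single_mul_single, AddMonoidAlgebra.natCast_def,
    AddMonoidAlgebra.single_mul_single]
  congr 1
  · simp only [nsmul_eq_mul, mul_one]
    push_cast [hk']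
    ring
  · simp

noncomputable def qc (n : ℕ) : ℚ := (zel ^ n).coeff 0

lemma qc_eq (n : ℕ) : qc n = if 2 ∣ n then (centralBinom (n/2) : ℚ) else 0 := by
  rw [qc, zel_pow, AddMonoidAlgebra.coeff_sum, Finsupp.finset_sum_apply]
  by_cases h2 : 2 ∣ n
  · obtain ⟨m, rfl⟩ := h2
    rw [if_pos ⟨m, rfl⟩]
    have hcong : ∀ k ∈ range (2*m+1),
        (AddMonoidAlgebra.single (2*(k:ℤ) - ((2*m : ℕ):ℤ)) (((2*m).choose k : ℚ))).coeff 0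
        = if k = m then (((2*m).choose k : ℚ)) else 0 := by
      intro k hk
      rw [AddMonoidAlgebra.coeff_single, Finsupp.single_apply]
      congr 1
      simp only [eq_iff_iff]
      constructor
      · intro h; omega
      · intro h; omega
    rw [Finset.sum_congr rfl hcong, Finset.sum_ite_eq' (range (2*m+1)) m]
    rw [if_pos (Finset.mem_range.mpr (by omega))]
    have : 2 * m / 2 = m := by omega
    rw [this, Nat.centralBinom]
  · rw [if_neg h2]
    apply Finset.sum_eq_zero
    intro k hk
    rw [AddMonoidAlgebra.coeff_single, Finsupp.single_apply, if_neg]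
    intro h
    omega

lemma qc_zero : qc 0 = 1 := by
  rw [qc, pow_zero, AddMonoidAlgebra.one_def, AddMonoidAlgebra.coeff_single, Finsupp.single_apply, if_pos rfl]

section SuppMod
variable {G : Type*} [AddCommMonoid G]

noncomputable def suppMod (T : Set G) : Submodule ℚ (AddMonoidAlgebra ℚ G) where
  carrier := {f | ∀ a, f.coeff a ≠ 0 → a ∈ T}
  add_mem' := by
    intro f g hf hg a ha
    rw [AddMonoidAlgebra.coeff_add, Finsupp.add_apply] at ha
    by_contra hc
    have h1 : f.coeff a = 0 := by by_contra h; exact hc (hf a h)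
    have h2 : g.coeff a = 0 := by by_contra h; exact hc (hg a h)
    rw [h1, h2, add_zero] at ha
    exact ha rfl
  zero_mem' := by intro a ha; simp at ha
  smul_mem' := by
    intro c f hf a ha
    rw [AddMonoidAlgebra.coeff_smul, Finsupp.smul_apply] at ha
    apply hf
    intro h
    rw [h, smul_zero] at ha
    exact ha rfl

lemma single_mem_suppMod {T : Set G} {a : G} (ha : a ∈ T) (c : ℚ) :
    AddMonoidAlgebra.single a c ∈ suppMod T := by
  classical
  intro b hb
  rw [AddMonoidAlgebra.coeff_single, Finsupp.single_apply] at hb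
  by_cases h : a = b
  · rw [← h]; exact ha
  · rw [if_neg h] at hb; exact absurd rfl hb

lemma mul_mem_suppMod {T : Set G} (hT : ∀ a ∈ T, ∀ b ∈ T, a + b ∈ T)
    {f g : AddMonoidAlgebra ℚ G} (hf : f ∈ suppMod T) (hg : g ∈ suppMod T) :
    f * g ∈ suppMod T := by
  classical
  intro a ha
  by_contra hc
  apply ha
  rw [AddMonoidAlgebra.mul_apply, Finsupp.sum]
  apply Finset.sum_eq_zero
  intro a₁ ha₁
  rw [Finsupp.sum]
  apply Finset.sum_eq_zero
  intro a₂ ha₂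
  rw [if_neg]
  intro h
  apply hc
  rw [← h]
  exact hT a₁ (hf a₁ (Finsupp.mem_support_iff.mp ha₁)) a₂ (hg a₂ (Finsupp.mem_support_iff.mp ha₂))

end SuppMod

section Sqq

noncomputable def sqq (n : ℕ) : ℚ := ∑ k ∈ range (n+1), qc k * qc (n-k)

lemma qc_odd {n : ℕ} (h : ¬ 2 ∣ n) : qc n = 0 := by rw [qc_eq, if_neg h]

private lemma even_sum (f : ℕ → ℚ) (hf : ∀ k, ¬ 2 ∣ k → f k = 0) (m : ℕ) :
    ∑ k ∈ range (2*m+1), f k = ∑ j ∈ range (m+1), f (2*j) := by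
  induction m with
  | zero => simp
  | succ m ih =>
      have h1 : 2*(m+1)+1 = (2*m+1) + 1 + 1 := by ring
      rw [h1, Finset.sum_range_succ, Finset.sum_range_succ (fun k => f k) (2*m+1), ih,
        Finset.sum_range_succ (fun j => f (2*j)) (m+1), hf (2*m+1) (by omega)]
      have h2 : 2*m+1+1 = 2*(m+1) := by ring
      rw [h2, add_zero]

lemma sqq_even (m : ℕ) : sqq (2*m) = (sN m : ℚ) := by
  rw [sqq, even_sum _ (fun k hk => by rw [qc_odd hk, zero_mul]) m, sN]
  push_cast
  apply Finset.sum_congr rfl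
  intro j hj
  have hj' : j ≤ m := by have := Finset.mem_range.mp hj; omega
  have h1 : 2*m - 2*j = 2*(m-j) := by omega
  rw [h1, qc_eq, qc_eq, if_pos ⟨j, rfl⟩, if_pos ⟨m-j, rfl⟩]
  have e1 : 2*j/2 = j := by omega
  have e2 : 2*(m-j)/2 = m-j := by omega
  rw [e1, e2]

lemma sqq_odd (m : ℕ) : sqq (2*m+1) = 0 := by
  rw [sqq]
  apply Finset.sum_eq_zero
  intro k hk
  by_cases h : 2 ∣ k
  · rw [qc_odd (n := 2*m+1-k) (by have := Finset.mem_range.mp hk; omega), mul_zero]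
  · rw [qc_odd h, zero_mul]

lemma sqq_zero : sqq 0 = 1 := by simp [sqq, qc_zero]

lemma sqq_one : sqq 1 = 0 := by
  have := sqq_odd 0
  simpa using this

lemma sqq_rec (n : ℕ) : sqq (n+2) = 4 * sqq n := by
  rcases Nat.even_or_odd n with he | ho
  · obtain ⟨m', hm'⟩ := he
    obtain ⟨m, rfl⟩ : ∃ m, n = 2*m := ⟨m', by omega⟩
    have h1 : 2*m+2 = 2*(m+1) := by ring
    rw [h1, sqq_even, sqq_even, sN_succ]
    push_cast
    ring
  · obtain ⟨m', hm'⟩ := ho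
    obtain ⟨m, rfl⟩ : ∃ m, n = 2*m+1 := ⟨m', by omega⟩
    have h1 : 2*m+1+2 = 2*(m+1)+1 := by ring
    rw [h1, sqq_odd, sqq_odd]
    ring

end Sqq

section WOne

noncomputable def W1 : PowerSeries Lam := PowerSeries.mk fun n => qc n • zel^n

lemma coeff_W1 (n : ℕ) : (coeff (R := Lam) n) W1 = qc n • zel^n := coeff_mk n _

lemma coeff_W1sq (n : ℕ) : (coeff (R := Lam) n) (W1*W1) = sqq n • zel^n := by
  rw [coeff_mul, Finset.Nat.sum_antidiagonal_eq_sum_range_succ_mk, sqq, Finset.sum_smul]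
  apply Finset.sum_congr rfl
  intro k hk
  have hk' : k ≤ n := by have := Finset.mem_range.mp hk; omega
  rw [coeff_W1, coeff_W1, smul_mul_smul_comm, ← pow_add]
  congr 2
  omega

noncomputable def M4 : PowerSeries Lam := X^2 * C (R := Lam) ((4:ℚ) • (zel*zel))

lemma N1 : (W1*W1) * (1 - M4) = 1 := by
  have key : ∀ n : ℕ, (coeff (R := Lam) n) ((W1*W1) * M4) = (if 2 ≤ n then sqq n • zel^n else 0) := by
    intro n
    rw [M4, show (W1*W1) * (X^2 * C (R := Lam) ((4:ℚ) • (zel*zel)))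
        = X^2 * ((W1*W1) * C (R := Lam) ((4:ℚ) • (zel*zel))) by ring]
    rw [PowerSeries.coeff_X_pow_mul']
    split_ifs with h
    · rw [PowerSeries.coeff_mul_C, coeff_W1sq, smul_mul_smul_comm,
        show zel*zel = zel^2 from (sq zel).symm, ← pow_add]
      obtain ⟨d, rfl⟩ : ∃ d, n = d + 2 := ⟨n - 2, by omega⟩
      have h1 : d + 2 - 2 = d := by omega
      rw [h1, sqq_rec]
      congr 1
      ring
    · rfl
  ext n
  rw [mul_sub, mul_one, map_sub, key, coeff_W1sq]
  cases n with
  | zero => simp [sqq_zero, coeff_one]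
  | succ n =>
      rw [coeff_one, if_neg (show ¬(n+1 = 0) by omega)]
      cases n with
      | zero =>
          rw [if_neg (show ¬(2 ≤ 1) by omega), sub_zero, sqq_one, zero_smul]
      | succ n =>
          rw [if_pos (show 2 ≤ n+1+1 by omega), sub_self]

end WOne

section LamSide
variable (R16 : PowerSeries ℚ)

noncomputable def phiQ : PowerSeries ℚ →+* PowerSeries Lam :=
  PowerSeries.map (algebraMap ℚ Lam)

lemma phiQ_X : phiQ X = X := by
  unfold phiQ
  exact PowerSeries.map_X (algebraMap ℚ Lam)

lemma phiQ_coeff (n : ℕ) (f : PowerSeries ℚ) :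
    (coeff (R := Lam) n) (phiQ f) = algebraMap ℚ Lam ((coeff (R := ℚ) n) f) := by
  unfold phiQ
  exact PowerSeries.coeff_map (f := algebraMap ℚ Lam) n f

noncomputable def F1 : PowerSeries Lam :=
  phiQ (Aq R16) - X^2 * C (R := Lam) (AddMonoidAlgebra.single (-2 : ℤ) (4:ℚ))

noncomputable def mmS : PowerSeries Lam :=
  (phiQ (rhoS R16))^2 * C (R := Lam) (AddMonoidAlgebra.single (2:ℤ) (1:ℚ))

lemma single_zero_eq_four : (AddMonoidAlgebra.single (0:ℤ) (4:ℚ)) = (4 : Lam) := by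
  rw [show (4 : Lam) = ((4:ℕ) : Lam) by norm_cast, AddMonoidAlgebra.natCast_def]
  norm_num

lemma single_zero_eq_eight : (AddMonoidAlgebra.single (0:ℤ) (8:ℚ)) = (8 : Lam) := by
  rw [show (8 : Lam) = ((8:ℕ) : Lam) by norm_cast, AddMonoidAlgebra.natCast_def]
  norm_num

lemma zel_sq : zel * zel = AddMonoidAlgebra.single (2:ℤ) (1:ℚ)
    + AddMonoidAlgebra.single (0:ℤ) (2:ℚ) + AddMonoidAlgebra.single (-2:ℤ) (1:ℚ) := by
  rw [zel, add_mul, mul_add, mul_add, AddMonoidAlgebra.single_mul_single,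
    AddMonoidAlgebra.single_mul_single, AddMonoidAlgebra.single_mul_single,
    AddMonoidAlgebra.single_mul_single, mul_one,
    show (1:ℤ) + 1 = 2 by norm_num, show (1:ℤ) + (-1) = 0 by norm_num,
    show (-1:ℤ) + 1 = 0 by norm_num, show (-1:ℤ) + (-1) = -2 by norm_num]
  have hb : AddMonoidAlgebra.single (0:ℤ) (1:ℚ) + AddMonoidAlgebra.single (0:ℤ) (1:ℚ)
      = AddMonoidAlgebra.single (0:ℤ) (2:ℚ) := by
    rw [← AddMonoidAlgebra.single_add]
    congr 1
    norm_num
  linear_combination (norm := abel) hb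

lemma M4_expand : M4 = X^2 * (4 * C (R := Lam) (AddMonoidAlgebra.single (2:ℤ) (1:ℚ)) + 8
    + C (R := Lam) (AddMonoidAlgebra.single (-2:ℤ) (4:ℚ))) := by
  rw [M4]
  congr 1
  have hzz : (4:ℚ) • (zel*zel) = AddMonoidAlgebra.single (2:ℤ) (4:ℚ)
      + AddMonoidAlgebra.single (0:ℤ) (8:ℚ) + AddMonoidAlgebra.single (-2:ℤ) (4:ℚ) := by
    rw [zel_sq, smul_add, smul_add, AddMonoidAlgebra.smul_single, AddMonoidAlgebra.smul_single,
      AddMonoidAlgebra.smul_single, show (4:ℚ) • (1:ℚ) = 4 by norm_num,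
      show (4:ℚ) • (2:ℚ) = 8 by norm_num]
  rw [hzz, map_add, map_add]
  have h24 : AddMonoidAlgebra.single (2:ℤ) (4:ℚ)
      = AddMonoidAlgebra.single (0:ℤ) (4:ℚ) * AddMonoidAlgebra.single (2:ℤ) (1:ℚ) := by
    rw [AddMonoidAlgebra.single_mul_single]; norm_num
  rw [h24, map_mul, single_zero_eq_four, map_ofNat, single_zero_eq_eight]
  try rw [map_ofNat]
  try ring

variable (hR0 : constantCoeff (R := ℚ) R16 = 1) (hR : R16 ^ 2 = 1 - 16 * X ^ 2)

include hR0 hR in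
lemma N2 : F1 R16 * (1 - mmS R16) = 1 - M4 := by
  have h3 : phiQ (Aq R16) * (phiQ (rhoS R16))^2 = 4*X^2 := by
    have := congrArg (phiQ) (AI3 R16 hR0 hR)
    simp only [map_mul, map_pow, map_ofNat, phiQ_X] at this
    exact this
  have h4 : phiQ (Aq R16) + 4*X^2*(phiQ (rhoS R16))^2 = 1 - 8*X^2 := by
    have := congrArg (phiQ) (AI4 R16 hR0 hR)
    simp only [map_add, map_mul, map_pow, map_sub, map_one, map_ofNat, phiQ_X] at this
    exact this
  have hc : C (R := Lam) (AddMonoidAlgebra.single (-2:ℤ) (4:ℚ))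
      * C (R := Lam) (AddMonoidAlgebra.single (2:ℤ) (1:ℚ)) = 4 := by
    rw [← map_mul, AddMonoidAlgebra.single_mul_single,
      show (-2:ℤ) + 2 = 0 by norm_num, show (4:ℚ)*1 = 4 by norm_num,
      single_zero_eq_four, map_ofNat]
  rw [M4_expand, F1, mmS]
  set a := phiQ (Aq R16)
  set r := phiQ (rhoS R16)
  set c2 := C (R := Lam) (AddMonoidAlgebra.single (2:ℤ) (1:ℚ))
  set cw := C (R := Lam) (AddMonoidAlgebra.single (-2:ℤ) (4:ℚ))
  linear_combination (-c2)*h3 + h4 + (X^2*r^2)*hc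

noncomputable def Gg : PowerSeries Lam :=
  PowerSeries.mk fun n => ∑ j ∈ range (n+1), (coeff (R := Lam) n) ((mmS R16)^j)

include hR0 hR in
lemma mm_const : constantCoeff (R := Lam) (mmS R16) = 0 := by
  rw [mmS, map_mul, map_pow]
  have h1 : constantCoeff (R := Lam) (phiQ (rhoS R16)) = 0 := by
    rw [← coeff_zero_eq_constantCoeff_apply, phiQ_coeff,
      coeff_zero_eq_constantCoeff_apply, rho0 R16 (r1_zero R16 hR0 hR), map_zero]
  rw [h1]
  ring

include hR0 hR in
lemma mm_pow_coeff_zero : ∀ n j : ℕ, n < j → (coeff (R := Lam) n) ((mmS R16)^j) = 0 := by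
  obtain ⟨g, hg⟩ := PowerSeries.X_dvd_iff.mpr (mm_const R16 hR0 hR)
  intro n j hnj
  rw [hg, mul_pow, PowerSeries.coeff_X_pow_mul', if_neg (by omega)]

include hR0 hR in
lemma N3 : (1 - mmS R16) * Gg R16 = 1 := by
  ext n : 1
  rw [sub_mul, one_mul, map_sub]
  have hGg : ∀ b : ℕ, b ≤ n → (coeff (R := Lam) b) (Gg R16)
      = ∑ j ∈ range (n+1), (coeff (R := Lam) b) ((mmS R16)^j) := by
    intro b hb
    rw [Gg, coeff_mk]
    apply Finset.sum_subset
    · intro x hx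
      rw [Finset.mem_range] at *
      omega
    · intro x hx hx'
      rw [Finset.mem_range, not_lt] at hx'
      exact mm_pow_coeff_zero R16 hR0 hR b x (by omega)
  have hmul : (coeff (R := Lam) n) (mmS R16 * Gg R16)
      = ∑ j ∈ range (n+1), (coeff (R := Lam) n) (mmS R16 * (mmS R16)^j) := by
    rw [coeff_mul]
    have : ∀ p ∈ antidiagonal n, (coeff (R := Lam) p.1) (mmS R16) * (coeff (R := Lam) p.2) (Gg R16)
        = ∑ j ∈ range (n+1), (coeff (R := Lam) p.1) (mmS R16) * (coeff (R := Lam) p.2) ((mmS R16)^j) := by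
      intro p hp
      rw [hGg p.2 (by simp at hp; omega), Finset.mul_sum]
    rw [Finset.sum_congr rfl this, Finset.sum_comm]
    apply Finset.sum_congr rfl
    intro j hj
    rw [coeff_mul]
  rw [hmul, hGg n le_rfl]
  have hshift : ∀ j : ℕ, mmS R16 * (mmS R16)^j = (mmS R16)^(j+1) := by
    intro j; rw [pow_succ]; ring
  simp only [hshift]
  rw [Finset.sum_range_succ' (fun j => (coeff (R := Lam) n) ((mmS R16)^j)) n,
    Finset.sum_range_succ (fun j => (coeff (R := Lam) n) ((mmS R16)^(j+1))) n,
    mm_pow_coeff_zero R16 hR0 hR n (n+1) (by omega)]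
  rw [pow_zero]
  ring

end LamSide

section LamSide2
variable (R16 : PowerSeries ℚ) (hR0 : constantCoeff (R := ℚ) R16 = 1) (hR : R16 ^ 2 = 1 - 16 * X ^ 2)

noncomputable def Ee : PowerSeries Lam := sqS (Gg R16)

noncomputable def V1 : PowerSeries Lam := sqS (F1 R16)

lemma Gg_const : constantCoeff (R := Lam) (Gg R16) = 1 := by
  rw [← coeff_zero_eq_constantCoeff_apply, Gg, coeff_mk]
  simp

include hR0 hR in
lemma Ee_sq : Ee R16 * Ee R16 = Gg R16 := sqS_sq _ (Gg_const R16)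

include hR0 in
lemma F1_const : constantCoeff (R := Lam) (F1 R16) = 1 := by
  rw [F1, map_sub, map_mul, map_pow, constantCoeff_X]
  have hAq : constantCoeff (R := ℚ) (Aq R16) = 1 := by
    rw [Aq, map_mul, constantCoeff_C, map_add, map_sub, map_one, map_mul, map_pow,
      constantCoeff_X, hR0]
    norm_num
  have h1 : constantCoeff (R := Lam) (phiQ (Aq R16)) = 1 := by
    rw [← coeff_zero_eq_constantCoeff_apply, phiQ_coeff, coeff_zero_eq_constantCoeff_apply,
      hAq, map_one]
  rw [h1]
  ring

include hR0 in
lemma V1_sq : V1 R16 * V1 R16 = F1 R16 := sqS_sq _ (F1_const R16 hR0)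

lemma coeff_F1_mem (n : ℕ) (hn : 1 ≤ n) :
    (coeff (R := Lam) n) (F1 R16) ∈ suppMod {a : ℤ | a ≤ 0} := by
  rw [F1, map_sub]
  apply Submodule.sub_mem
  · rw [phiQ_coeff, AddMonoidAlgebra.coe_algebraMap]
    exact single_mem_suppMod (by norm_num) _
  · rw [show X^2 * C (R := Lam) (AddMonoidAlgebra.single (-2 : ℤ) (4:ℚ))
        = X^2 * (C (R := Lam) (AddMonoidAlgebra.single (-2 : ℤ) (4:ℚ)) * 1) by ring,
      PowerSeries.coeff_X_pow_mul']
    split_ifs with h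
    · rw [mul_one, coeff_C]
      split_ifs with h2
      · exact single_mem_suppMod (by norm_num) _
      · exact Submodule.zero_mem _
    · exact Submodule.zero_mem _

lemma hle_add : ∀ a ∈ {a : ℤ | a ≤ 0}, ∀ b ∈ {a : ℤ | a ≤ 0}, a + b ∈ {a : ℤ | a ≤ 0} := by
  intro a ha b hb
  simp only [Set.mem_setOf_eq] at *
  omega

lemma hge_add : ∀ a ∈ {a : ℤ | 1 ≤ a}, ∀ b ∈ {a : ℤ | 1 ≤ a}, a + b ∈ {a : ℤ | 1 ≤ a} := by
  intro a ha b hb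
  simp only [Set.mem_setOf_eq] at *
  omega

lemma coeff_V1_mem (n : ℕ) : (coeff (R := Lam) n) (V1 R16) ∈ suppMod {a : ℤ | a ≤ 0} := by
  rw [V1, sqS, coeff_mk]
  cases n with
  | zero =>
      rw [sqC_zero, AddMonoidAlgebra.one_def]
      exact single_mem_suppMod (by norm_num) _
  | succ n =>
      exact sqC_mem (F1 R16) (suppMod {a : ℤ | a ≤ 0})
        (fun a ha b hb => mul_mem_suppMod hle_add ha hb)
        (coeff_F1_mem R16) (n+1) (by omega)

include hR0 hR in
lemma coeff_Gg_mem (n : ℕ) (hn : 1 ≤ n) :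
    (coeff (R := Lam) n) (Gg R16) ∈ suppMod {a : ℤ | 1 ≤ a} := by
  rw [Gg, coeff_mk, Finset.sum_range_succ' (fun j => (coeff (R := Lam) n) ((mmS R16)^j)) n]
  apply Submodule.add_mem
  · apply Submodule.sum_mem
    intro j hj
    have hmmpow : (mmS R16)^(j+1) = (phiQ (rhoS R16))^(2*(j+1))
        * C (R := Lam) (AddMonoidAlgebra.single ((2*(j+1) : ℕ) : ℤ) (1:ℚ)) := by
      rw [mmS, mul_pow, ← pow_mul, ← map_pow phiQ, ← map_pow (C (R := Lam)),
        AddMonoidAlgebra.single_pow, one_pow]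
      congr 2
      congr 1
      push_cast
      ring
    rw [hmmpow, PowerSeries.coeff_mul_C, ← map_pow, phiQ_coeff, AddMonoidAlgebra.coe_algebraMap]
    have : (AddMonoidAlgebra.single (0:ℤ) ((coeff (R := ℚ) n) ((rhoS R16)^(2*(j+1)))))
        * AddMonoidAlgebra.single ((2*(j+1) : ℕ) : ℤ) (1:ℚ)
        = AddMonoidAlgebra.single ((2*(j+1) : ℕ) : ℤ)
            ((coeff (R := ℚ) n) ((rhoS R16)^(2*(j+1)))) := by
      rw [AddMonoidAlgebra.single_mul_single, zero_add, mul_one]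
    rw [show (algebraMap ℚ ℚ) = RingHom.id ℚ from rfl]
    simp only [Function.comp_apply, RingHom.id_apply]
    rw [this]
    apply single_mem_suppMod
    simp only [Set.mem_setOf_eq]
    push_cast
    omega
  · rw [pow_zero, coeff_one, if_neg (by omega)]
    exact Submodule.zero_mem _

include hR0 hR in
lemma coeff_Ee_mem (n : ℕ) (hn : 1 ≤ n) :
    (coeff (R := Lam) n) (Ee R16) ∈ suppMod {a : ℤ | 1 ≤ a} := by
  rw [Ee, sqS, coeff_mk]
  exact sqC_mem (Gg R16) (suppMod {a : ℤ | 1 ≤ a})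
    (fun a ha b hb => mul_mem_suppMod hge_add ha hb)
    (fun k hk => coeff_Gg_mem R16 hR0 hR k hk) n hn

lemma W1_const : constantCoeff (R := Lam) W1 = 1 := by
  rw [← coeff_zero_eq_constantCoeff_apply, coeff_W1, qc_zero, pow_zero, one_smul]

include hR0 hR in
lemma N4 : V1 R16 * W1 = Ee R16 := by
  have h1 : (V1 R16 * W1) * (V1 R16 * W1) * (1 - mmS R16) = 1 := by
    have : (V1 R16 * W1) * (V1 R16 * W1) * (1 - mmS R16)
        = (W1 * W1) * ((V1 R16 * V1 R16) * (1 - mmS R16)) := by ring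
    rw [this, V1_sq R16 hR0, N2 R16 hR0 hR, N1]
  have h2 : (Ee R16 * Ee R16) * (1 - mmS R16) = 1 := by
    rw [Ee_sq R16 hR0 hR]
    have := N3 R16 hR0 hR
    linear_combination this
  have hsq : (V1 R16 * W1) * (V1 R16 * W1) = Ee R16 * Ee R16 := by
    calc (V1 R16 * W1) * (V1 R16 * W1)
        = (V1 R16 * W1) * (V1 R16 * W1) * ((1 - mmS R16) * Gg R16) := by
          rw [N3 R16 hR0 hR, mul_one]
      _ = ((V1 R16 * W1) * (V1 R16 * W1) * (1 - mmS R16)) * Gg R16 := by ring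
      _ = Gg R16 := by rw [h1, one_mul]
      _ = Ee R16 * Ee R16 := (Ee_sq R16 hR0 hR).symm
  have hzero : (V1 R16 * W1 - Ee R16) * (V1 R16 * W1 + Ee R16) = 0 := by
    linear_combination hsq
  have hconst : constantCoeff (R := Lam) (V1 R16 * W1 + Ee R16)
      = AddMonoidAlgebra.single (0:ℤ) (2:ℚ) := by
    rw [map_add, map_mul, W1_const, mul_one]
    have hv : constantCoeff (R := Lam) (V1 R16) = 1 := by
      rw [← coeff_zero_eq_constantCoeff_apply, V1, sqS, coeff_mk, sqC_zero]
    have he : constantCoeff (R := Lam) (Ee R16) = 1 := by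
      rw [← coeff_zero_eq_constantCoeff_apply, Ee, sqS, coeff_mk, sqC_zero]
    rw [hv, he, AddMonoidAlgebra.one_def, ← AddMonoidAlgebra.single_add]
    norm_num
  have hunit : ∃ u : Lamˣ, (u : Lam) = AddMonoidAlgebra.single (0:ℤ) (2:ℚ) := by
    refine ⟨⟨AddMonoidAlgebra.single (0:ℤ) (2:ℚ), AddMonoidAlgebra.single (0:ℤ) (2⁻¹:ℚ),
      ?_, ?_⟩, rfl⟩
    · rw [AddMonoidAlgebra.single_mul_single, add_zero, AddMonoidAlgebra.one_def]
      norm_num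
    · rw [AddMonoidAlgebra.single_mul_single, add_zero, AddMonoidAlgebra.one_def]
      norm_num
  obtain ⟨u, hu⟩ := hunit
  have hinv := PowerSeries.mul_invOfUnit (V1 R16 * W1 + Ee R16) u (by rw [hconst, hu])
  have : (V1 R16 * W1 - Ee R16)
      * ((V1 R16 * W1 + Ee R16) * (V1 R16 * W1 + Ee R16).invOfUnit u) = 0 := by
    rw [← mul_assoc, hzero, zero_mul]
  rw [hinv, mul_one] at this
  linear_combination this
  
end LamSide2

section BigSide

abbrev LL : Type := AddMonoidAlgebra ℚ (ℤ × ℤ)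

noncomputable def iota1 : Lam →+* LL :=
  AddMonoidAlgebra.mapDomainRingHom ℚ (AddMonoidHom.inl ℤ ℤ)

noncomputable def iota2 : Lam →+* LL :=
  AddMonoidAlgebra.mapDomainRingHom ℚ (AddMonoidHom.inr ℤ ℤ)

lemma iota1_def (f : Lam) :
    iota1 f = AddMonoidAlgebra.mapDomain (fun a => ((a, 0) : ℤ × ℤ)) f := rfl

lemma iota2_def (f : Lam) :
    iota2 f = AddMonoidAlgebra.mapDomain (fun b => ((0, b) : ℤ × ℤ)) f := rfl

lemma iota1_single (a : ℤ) (c : ℚ) :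
    iota1 (AddMonoidAlgebra.single a c) = AddMonoidAlgebra.single ((a, 0) : ℤ × ℤ) c := by
  rw [iota1_def]
  exact AddMonoidAlgebra.mapDomain_single

lemma iota2_single (b : ℤ) (c : ℚ) :
    iota2 (AddMonoidAlgebra.single b c) = AddMonoidAlgebra.single ((0, b) : ℤ × ℤ) c := by
  rw [iota2_def]
  exact AddMonoidAlgebra.mapDomain_single

lemma iota1_apply_fst (f : Lam) (i : ℤ) : (iota1 f).coeff ((i, 0) : ℤ × ℤ) = f.coeff i := by
  rw [iota1_def]
  exact Finsupp.mapDomain_apply (fun a b hab => by simpa using congrArg Prod.fst hab) f.coeff i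

lemma iota1_apply_ne (f : Lam) (p : ℤ × ℤ) (hp : p.2 ≠ 0) : (iota1 f).coeff p = 0 := by
  rw [iota1_def]
  show Finsupp.mapDomain (fun a => ((a, 0) : ℤ × ℤ)) f.coeff p = 0
  apply Finsupp.mapDomain_notin_range
  rintro ⟨a, ha⟩
  apply hp
  rw [← ha]

lemma pair_apply (f g : Lam) (i j : ℤ) : (iota1 f * iota2 g).coeff ((i, j) : ℤ × ℤ) = f.coeff i * g.coeff j := by
  induction f using AddMonoidAlgebra.induction_linear with
  | zero => simp
  | add f1 f2 h1 h2 =>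
      rw [map_add, add_mul, AddMonoidAlgebra.coeff_add, Finsupp.add_apply, h1, h2,
        AddMonoidAlgebra.coeff_add, Finsupp.add_apply, add_mul]
  | single a c =>
      induction g using AddMonoidAlgebra.induction_linear with
      | zero => simp
      | add g1 g2 h1 h2 =>
          rw [map_add, mul_add, AddMonoidAlgebra.coeff_add, Finsupp.add_apply, h1, h2,
            AddMonoidAlgebra.coeff_add, Finsupp.add_apply, mul_add]
      | single b d =>
          rw [iota1_single, iota2_single, AddMonoidAlgebra.single_mul_single]
          rw [show ((a,(0:ℤ)) : ℤ×ℤ) + ((0:ℤ),b) = (a,b) from by simp]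
          simp only [AddMonoidAlgebra.coeff_single]
          rw [Finsupp.single_apply, Finsupp.single_apply, Finsupp.single_apply]
          by_cases hai : a = i <;> by_cases hbj : b = j <;>
            simp [hai, hbj, Prod.mk.injEq]

noncomputable def pel : LL :=
  (AddMonoidAlgebra.single ((1:ℤ), (0:ℤ)) (1:ℚ) + AddMonoidAlgebra.single ((-1:ℤ), (0:ℤ)) (1:ℚ))
  * (AddMonoidAlgebra.single ((0:ℤ), (1:ℤ)) (1:ℚ) + AddMonoidAlgebra.single ((0:ℤ), (-1:ℤ)) (1:ℚ))

lemma pel_eq : pel = iota1 zel * iota2 zel := by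
  rw [pel, zel, map_add, map_add, iota1_single, iota1_single, iota2_single, iota2_single]

noncomputable def Wbig : PowerSeries LL := PowerSeries.mk fun n => pel ^ n

lemma KW : (1 - X * C (R := LL) pel) * Wbig = 1 := by
  ext n : 1
  rw [sub_mul, one_mul, map_sub]
  have h1 : X * C (R := LL) pel * Wbig = X * (C (R := LL) pel * Wbig) := by ring
  rw [h1]
  cases n with
  | zero =>
      have hz : (coeff (R := LL) 0) (X * (C (R := LL) pel * Wbig)) = 0 := by
        rw [coeff_zero_eq_constantCoeff_apply, map_mul, constantCoeff_X, zero_mul]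
      rw [hz, sub_zero, Wbig, coeff_mk, pow_zero, coeff_one, if_pos rfl]
  | succ n =>
      rw [coeff_succ_X_mul, coeff_C_mul, Wbig, coeff_mk, coeff_mk, coeff_one,
        if_neg (show ¬(n+1 = 0) by omega), pow_succ]
      ring

variable (R16 : PowerSeries ℚ) (hR0 : constantCoeff (R := ℚ) R16 = 1) (hR : R16 ^ 2 = 1 - 16 * X ^ 2)

noncomputable def Vbig : PowerSeries LL := PowerSeries.map iota1 (V1 R16)

noncomputable def Sh : PowerSeries LL := Vbig R16 * Wbig

lemma coeff_Vbig (n : ℕ) : (coeff (R := LL) n) (Vbig R16) = iota1 ((coeff (R := Lam) n) (V1 R16)) :=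
  PowerSeries.coeff_map (f := iota1) n _

lemma Sh_section (n : ℕ) (i : ℤ) :
    ((coeff (R := LL) n) (Sh R16)).coeff ((i, 0) : ℤ × ℤ) = ((coeff (R := Lam) n) (V1 R16 * W1)).coeff i := by
  rw [Sh, coeff_mul, coeff_mul, AddMonoidAlgebra.coeff_sum, AddMonoidAlgebra.coeff_sum,
    Finset.sum_apply', Finset.sum_apply']
  apply Finset.sum_congr rfl
  intro p hp
  rw [coeff_Vbig, Wbig, coeff_mk, coeff_W1]
  have hpow : pel ^ p.2 = iota1 (zel ^ p.2) * iota2 (zel ^ p.2) := by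
    rw [pel_eq, mul_pow, map_pow, map_pow]
  rw [hpow, ← mul_assoc, ← map_mul, pair_apply, mul_smul_comm, AddMonoidAlgebra.coeff_smul, Finsupp.smul_apply,
    smul_eq_mul, qc]
  ring

include hR0 hR in
lemma Sh_H_vanish (n : ℕ) (hn : 1 ≤ n) (i : ℤ) (hi : i ≤ 0) :
    ((coeff (R := LL) n) (Sh R16)).coeff ((i, 0) : ℤ × ℤ) = 0 := by
  rw [Sh_section, N4 R16 hR0 hR]
  by_contra hc
  have := coeff_Ee_mem R16 hR0 hR n hn i hc
  simp only [Set.mem_setOf_eq] at this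
  omega

lemma Sh_zero : (coeff (R := LL) 0) (Sh R16) = 1 := by
  rw [Sh, coeff_zero_eq_constantCoeff_apply, map_mul]
  have h1 : constantCoeff (R := LL) (Vbig R16) = 1 := by
    rw [← coeff_zero_eq_constantCoeff_apply, coeff_Vbig, V1, sqS, coeff_mk, sqC_zero, map_one]
  have h2 : constantCoeff (R := LL) Wbig = 1 := by
    rw [← coeff_zero_eq_constantCoeff_apply, Wbig, coeff_mk, pow_zero]
  rw [h1, h2, mul_one]

lemma Sh_kernel : (1 - X * C (R := LL) pel) * Sh R16 = Vbig R16 := by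
  rw [Sh, show (1 - X * C (R := LL) pel) * (Vbig R16 * Wbig)
    = Vbig R16 * ((1 - X * C (R := LL) pel) * Wbig) by ring, KW, mul_one]

lemma Sh_rec (n : ℕ) : (coeff (R := LL) (n+1)) (Sh R16)
    = (coeff (R := LL) (n+1)) (Vbig R16) + pel * (coeff (R := LL) n) (Sh R16) := by
  have h := congrArg (coeff (R := LL) (n+1)) (Sh_kernel R16)
  rw [sub_mul, one_mul, map_sub, show X * C (R := LL) pel * Sh R16 = X * (C (R := LL) pel * Sh R16) by ring,
    coeff_succ_X_mul, coeff_C_mul] at h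
  linear_combination h

lemma Vbig_off_H (n : ℕ) (p : ℤ × ℤ) (hp : p ∉ slitH) : ((coeff (R := LL) n) (Vbig R16)).coeff p = 0 := by
  rw [coeff_Vbig]
  by_cases h2 : p.2 = 0
  · obtain ⟨i, j⟩ := p
    simp only at h2
    subst h2
    rw [iota1_apply_fst]
    by_contra hc
    have := coeff_V1_mem R16 n i hc
    simp only [Set.mem_setOf_eq] at this
    apply hp
    exact ⟨rfl, this⟩
  · exact iota1_apply_ne _ p h2

lemma pel_expand : pel = AddMonoidAlgebra.single ((1:ℤ),(1:ℤ)) (1:ℚ)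
    + AddMonoidAlgebra.single ((1:ℤ),(-1:ℤ)) (1:ℚ)
    + AddMonoidAlgebra.single ((-1:ℤ),(1:ℤ)) (1:ℚ)
    + AddMonoidAlgebra.single ((-1:ℤ),(-1:ℤ)) (1:ℚ) := by
  rw [pel, add_mul, mul_add, mul_add, AddMonoidAlgebra.single_mul_single,
    AddMonoidAlgebra.single_mul_single, AddMonoidAlgebra.single_mul_single,
    AddMonoidAlgebra.single_mul_single]
  norm_num
  abel

lemma pel_mul_apply (f : LL) (p : ℤ × ℤ) :
    (pel * f).coeff p = f.coeff (p - ((1,1) : ℤ×ℤ)) + f.coeff (p - ((1,-1) : ℤ×ℤ))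
      + f.coeff (p - ((-1,1) : ℤ×ℤ)) + f.coeff (p - ((-1,-1) : ℤ×ℤ)) := by
  rw [pel_expand, add_mul, add_mul, add_mul]
  simp only [AddMonoidAlgebra.coeff_add, Finsupp.add_apply]
  rw [AddMonoidAlgebra.coeff_single_mul_apply, AddMonoidAlgebra.coeff_single_mul_apply,
    AddMonoidAlgebra.coeff_single_mul_apply, AddMonoidAlgebra.coeff_single_mul_apply]
  simp only [one_mul, neg_add_eq_sub]

end BigSide

section Walks

def Wk (q : ℤ × ℤ) (n : ℕ) : Type :=
  {w : Fin (n+1) → ℤ × ℤ // IsSlitWalk diagSteps n w ∧ w (Fin.last n) = q}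

lemma slitCount_eq_card (i j : ℤ) (n : ℕ) :
    slitCount diagSteps i j n = Nat.card (Wk (i,j) n) := rfl

lemma slitCount_zero (A : Set (ℤ × ℤ)) (i j : ℤ) :
    slitCount A i j 0 = if (i,j) = ((0:ℤ),(0:ℤ)) then 1 else 0 := by
  split_ifs with h
  · rw [slitCount]
    have : Unique {w : Fin 1 → ℤ × ℤ // IsSlitWalk A 0 w ∧ w (Fin.last 0) = (i, j)} := by
      refine ⟨⟨⟨fun _ => (0,0), ⟨rfl, fun m => Fin.elim0 m, fun m hm => by
        have := m.isLt; omega⟩, by rw [h]⟩⟩, ?_⟩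
      intro w
      apply Subtype.ext
      funext m
      have hm : m = 0 := Subsingleton.elim m 0
      rw [hm]
      exact w.2.1.1
    rw [Nat.card_unique]
  · rw [slitCount]
    have : IsEmpty {w : Fin 1 → ℤ × ℤ // IsSlitWalk A 0 w ∧ w (Fin.last 0) = (i, j)} := by
      constructor
      rintro ⟨w, ⟨hw0, _, _⟩, hend⟩
      apply h
      rw [← hend]
      have : Fin.last 0 = 0 := rfl
      rw [this, hw0]
    exact Nat.card_of_isEmpty

lemma diagSteps_finite : diagSteps.Finite := by
  rw [diagSteps]
  exact (Set.finite_singleton _).insert _ |>.insert _ |>.insert _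

lemma walk_ext {A : Set (ℤ × ℤ)} {n : ℕ} {w w' : Fin (n+1) → ℤ × ℤ}
    (hw : IsSlitWalk A n w) (hw' : IsSlitWalk A n w')
    (hs : ∀ m : Fin n, w m.succ - w m.castSucc = w' m.succ - w' m.castSucc) : w = w' := by
  funext m
  induction m using Fin.induction with
  | zero => rw [hw.1, hw'.1]
  | succ m ih =>
      have h := hs m
      have : w m.succ = w m.castSucc + (w m.succ - w m.castSucc) := by abel
      rw [this, h, ih]
      abel

instance Wk_finite (q : ℤ × ℤ) (n : ℕ) : Finite (Wk q n) := by
  haveI : Finite ↥diagSteps := diagSteps_finite.to_subtype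
  apply Finite.of_injective
    (f := fun (w : Wk q n) (m : Fin n) =>
      (⟨w.1 m.succ - w.1 m.castSucc, w.2.1.2.1 m⟩ : ↥diagSteps))
  intro w w' h
  apply Subtype.ext
  apply walk_ext w.2.1 w'.2.1
  intro m
  have := congrFun h m
  exact congrArg Subtype.val this

lemma trunc_walk {A : Set (ℤ × ℤ)} {n : ℕ} {w : Fin (n+2) → ℤ × ℤ}
    (hw : IsSlitWalk A (n+1) w) : IsSlitWalk A n (w ∘ Fin.castSucc) := by
  refine ⟨?_, ?_, ?_⟩
  · show w (Fin.castSucc 0) = (0,0)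
    rw [Fin.castSucc_zero, hw.1]
  · intro m
    have h1 : Fin.castSucc m.succ = (Fin.castSucc m).succ := (Fin.succ_castSucc m).symm
    have h2 : Fin.castSucc m.castSucc = (Fin.castSucc m).castSucc := by
      ext; simp
    show w (Fin.castSucc m.succ) - w (Fin.castSucc m.castSucc) ∈ A
    rw [h1, h2]
    exact hw.2.1 (Fin.castSucc m)
  · intro m hm
    show w (Fin.castSucc m) ∉ slitH
    exact hw.2.2 (Fin.castSucc m) (by rwa [Fin.coe_castSucc])

lemma snoc_walk {A : Set (ℤ × ℤ)} {n : ℕ} {u : Fin (n+1) → ℤ × ℤ}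
    (hu : IsSlitWalk A n u) (q : ℤ × ℤ) (hq : q ∉ slitH)
    (hd : q - u (Fin.last n) ∈ A) : IsSlitWalk A (n+1) (Fin.snoc u q) := by
  refine ⟨?_, ?_, ?_⟩
  · show (Fin.snoc u q : Fin (n+2) → ℤ × ℤ) 0 = (0,0)
    rw [show (0 : Fin (n+2)) = Fin.castSucc 0 by rw [Fin.castSucc_zero], Fin.snoc_castSucc,
      hu.1]
  · intro m
    induction m using Fin.lastCases with
    | last =>
        rw [Fin.succ_last, Fin.snoc_last, Fin.snoc_castSucc]
        exact hd
    | cast m' =>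
        have h1 : (Fin.castSucc m').succ = Fin.castSucc m'.succ := Fin.succ_castSucc m'
        have h2 : (Fin.castSucc m').castSucc = Fin.castSucc m'.castSucc := by
          ext; simp
        rw [h1, h2, Fin.snoc_castSucc, Fin.snoc_castSucc]
        exact hu.2.1 m'
  · intro m hm
    induction m using Fin.lastCases with
    | last => rwa [Fin.snoc_last]
    | cast m' =>
        rw [Fin.snoc_castSucc]
        exact hu.2.2 m' (by rwa [Fin.coe_castSucc] at hm)

lemma snoc_trunc {n : ℕ} (w : Fin (n+2) → ℤ × ℤ) :
    Fin.snoc (w ∘ Fin.castSucc) (w (Fin.last (n+1))) = w := by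
  funext m
  induction m using Fin.lastCases with
  | last => rw [Fin.snoc_last]
  | cast m' => rw [Fin.snoc_castSucc]; rfl

lemma trunc_snoc {n : ℕ} (u : Fin (n+1) → ℤ × ℤ) (q : ℤ × ℤ) :
    (Fin.snoc u q : Fin (n+2) → ℤ × ℤ) ∘ Fin.castSucc = u := by
  funext m
  simp

end Walks

section MainEquiv

variable (i j : ℤ) (n : ℕ)

lemma lastStep_mem (w : Wk ((i,j) : ℤ×ℤ) (n+1)) :
    ((i,j) : ℤ×ℤ) - w.1 (Fin.castSucc (Fin.last n)) ∈ diagSteps := by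
  have h := w.2.1.2.1 (Fin.last n)
  rwa [Fin.succ_last, w.2.2] at h

lemma trunc_end (w : Wk ((i,j) : ℤ×ℤ) (n+1)) (d : ℤ×ℤ)
    (hd : ((i,j) : ℤ×ℤ) - w.1 (Fin.castSucc (Fin.last n)) = d) :
    (w.1 ∘ Fin.castSucc) (Fin.last n) = ((i,j) : ℤ×ℤ) - d := by
  show w.1 (Fin.castSucc (Fin.last n)) = _
  rw [← hd]
  abel

lemma diag_mem_cases (d : ℤ×ℤ) (hd : d ∈ diagSteps) :
    d = (1,1) ∨ d = (1,-1) ∨ d = (-1,1) ∨ d = (-1,-1) := by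
  simpa [diagSteps] using hd

noncomputable def walkEquiv (hij : ((i,j) : ℤ×ℤ) ∉ slitH) :
    Wk ((i,j) : ℤ×ℤ) (n+1)
      ≃ ((Wk ((i-1,j-1) : ℤ×ℤ) n ⊕ Wk ((i-1,j+1) : ℤ×ℤ) n)
        ⊕ (Wk ((i+1,j-1) : ℤ×ℤ) n ⊕ Wk ((i+1,j+1) : ℤ×ℤ) n)) where
  toFun w :=
    if h11 : ((i,j) : ℤ×ℤ) - w.1 (Fin.castSucc (Fin.last n)) = (1,1) then
      Sum.inl (Sum.inl ⟨w.1 ∘ Fin.castSucc, trunc_walk w.2.1,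
        by rw [trunc_end i j n w _ h11]; show ((i,j) : ℤ×ℤ) - (1,1) = _; rw [Prod.mk_sub_mk]⟩)
    else if h12 : ((i,j) : ℤ×ℤ) - w.1 (Fin.castSucc (Fin.last n)) = (1,-1) then
      Sum.inl (Sum.inr ⟨w.1 ∘ Fin.castSucc, trunc_walk w.2.1,
        by rw [trunc_end i j n w _ h12]; show ((i,j) : ℤ×ℤ) - (1,-1) = _; rw [Prod.mk_sub_mk]
           norm_num⟩)
    else if h21 : ((i,j) : ℤ×ℤ) - w.1 (Fin.castSucc (Fin.last n)) = (-1,1) then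
      Sum.inr (Sum.inl ⟨w.1 ∘ Fin.castSucc, trunc_walk w.2.1,
        by rw [trunc_end i j n w _ h21]; show ((i,j) : ℤ×ℤ) - (-1,1) = _; rw [Prod.mk_sub_mk]
           norm_num⟩)
    else
      Sum.inr (Sum.inr ⟨w.1 ∘ Fin.castSucc, trunc_walk w.2.1, by
        have h22 : ((i,j) : ℤ×ℤ) - w.1 (Fin.castSucc (Fin.last n)) = (-1,-1) := by
          rcases diag_mem_cases _ (lastStep_mem i j n w) with h | h | h | h
          · exact absurd h h11
          · exact absurd h h12
          · exact absurd h h21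
          · exact h
        rw [trunc_end i j n w _ h22]; show ((i,j) : ℤ×ℤ) - (-1,-1) = _; rw [Prod.mk_sub_mk]
        norm_num⟩)
  invFun s :=
    match s with
    | Sum.inl (Sum.inl u) => ⟨Fin.snoc u.1 (i,j),
        snoc_walk u.2.1 (i,j) hij (by
          rw [u.2.2]; show ((i,j) : ℤ×ℤ) - ((i-1,j-1) : ℤ×ℤ) ∈ diagSteps
          rw [Prod.mk_sub_mk]; norm_num; simp [diagSteps]),
        Fin.snoc_last _ _⟩
    | Sum.inl (Sum.inr u) => ⟨Fin.snoc u.1 (i,j),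
        snoc_walk u.2.1 (i,j) hij (by
          rw [u.2.2]; show ((i,j) : ℤ×ℤ) - ((i-1,j+1) : ℤ×ℤ) ∈ diagSteps
          rw [Prod.mk_sub_mk]; norm_num; simp [diagSteps]),
        Fin.snoc_last _ _⟩
    | Sum.inr (Sum.inl u) => ⟨Fin.snoc u.1 (i,j),
        snoc_walk u.2.1 (i,j) hij (by
          rw [u.2.2]; show ((i,j) : ℤ×ℤ) - ((i+1,j-1) : ℤ×ℤ) ∈ diagSteps
          rw [Prod.mk_sub_mk]; norm_num; simp [diagSteps]),
        Fin.snoc_last _ _⟩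
    | Sum.inr (Sum.inr u) => ⟨Fin.snoc u.1 (i,j),
        snoc_walk u.2.1 (i,j) hij (by
          rw [u.2.2]; show ((i,j) : ℤ×ℤ) - ((i+1,j+1) : ℤ×ℤ) ∈ diagSteps
          rw [Prod.mk_sub_mk]; norm_num; simp [diagSteps]),
        Fin.snoc_last _ _⟩
  left_inv w := by
    have hrec : ∀ (h : True), Fin.snoc (w.1 ∘ Fin.castSucc) ((i,j) : ℤ×ℤ) = w.1 := by
      intro _
      have := snoc_trunc w.1
      rwa [w.2.2] at this
    by_cases h11 : ((i,j) : ℤ×ℤ) - w.1 (Fin.castSucc (Fin.last n)) = (1,1)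
    · simp only [dif_pos h11]
      exact Subtype.ext (hrec trivial)
    · by_cases h12 : ((i,j) : ℤ×ℤ) - w.1 (Fin.castSucc (Fin.last n)) = (1,-1)
      · simp only [dif_neg h11, dif_pos h12]
        exact Subtype.ext (hrec trivial)
      · by_cases h21 : ((i,j) : ℤ×ℤ) - w.1 (Fin.castSucc (Fin.last n)) = (-1,1)
        · simp only [dif_neg h11, dif_neg h12, dif_pos h21]
          exact Subtype.ext (hrec trivial)
        · simp only [dif_neg h11, dif_neg h12, dif_neg h21]
          exact Subtype.ext (hrec trivial)
  right_inv s := by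
    rcases s with (u | u) | (u | u)
    · have hd : ((i,j) : ℤ×ℤ) - (Fin.snoc u.1 ((i,j):ℤ×ℤ) : Fin (n+2) → ℤ×ℤ) (Fin.castSucc (Fin.last n))
          = ((1,1) : ℤ×ℤ) := by
        rw [Fin.snoc_castSucc, u.2.2, Prod.mk_sub_mk]
        norm_num
      simp only [dif_pos hd]
      exact congrArg Sum.inl (congrArg Sum.inl (Subtype.ext (trunc_snoc u.1 _)))
    · have hd : ((i,j) : ℤ×ℤ) - (Fin.snoc u.1 ((i,j):ℤ×ℤ) : Fin (n+2) → ℤ×ℤ) (Fin.castSucc (Fin.last n))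
          = ((1,-1) : ℤ×ℤ) := by
        rw [Fin.snoc_castSucc, u.2.2, Prod.mk_sub_mk]
        norm_num
      simp only [dif_neg (hd ▸ (by decide : ((1:ℤ),(-1:ℤ)) ≠ (1,1))), dif_pos hd]
      exact congrArg Sum.inl (congrArg Sum.inr (Subtype.ext (trunc_snoc u.1 _)))
    · have hd : ((i,j) : ℤ×ℤ) - (Fin.snoc u.1 ((i,j):ℤ×ℤ) : Fin (n+2) → ℤ×ℤ) (Fin.castSucc (Fin.last n))
          = ((-1,1) : ℤ×ℤ) := by
        rw [Fin.snoc_castSucc, u.2.2, Prod.mk_sub_mk]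
        norm_num
      simp only [dif_neg (hd ▸ (by decide : ((-1:ℤ),(1:ℤ)) ≠ (1,1))),
        dif_neg (hd ▸ (by decide : ((-1:ℤ),(1:ℤ)) ≠ (1,-1))), dif_pos hd]
      exact congrArg Sum.inr (congrArg Sum.inl (Subtype.ext (trunc_snoc u.1 _)))
    · have hd : ((i,j) : ℤ×ℤ) - (Fin.snoc u.1 ((i,j):ℤ×ℤ) : Fin (n+2) → ℤ×ℤ) (Fin.castSucc (Fin.last n))
          = ((-1,-1) : ℤ×ℤ) := by
        rw [Fin.snoc_castSucc, u.2.2, Prod.mk_sub_mk]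
        norm_num
      simp only [dif_neg (hd ▸ (by decide : ((-1:ℤ),(-1:ℤ)) ≠ (1,1))),
        dif_neg (hd ▸ (by decide : ((-1:ℤ),(-1:ℤ)) ≠ (1,-1))),
        dif_neg (hd ▸ (by decide : ((-1:ℤ),(-1:ℤ)) ≠ (-1,1)))]
      exact congrArg Sum.inr (congrArg Sum.inr (Subtype.ext (trunc_snoc u.1 _)))

lemma slitCount_succ (hij : ((i,j) : ℤ×ℤ) ∉ slitH) :
    slitCount diagSteps i j (n+1)
      = slitCount diagSteps (i-1) (j-1) n + slitCount diagSteps (i-1) (j+1) n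
        + slitCount diagSteps (i+1) (j-1) n + slitCount diagSteps (i+1) (j+1) n := by
  rw [slitCount_eq_card, Nat.card_congr (walkEquiv i j n hij), Nat.card_sum, Nat.card_sum,
    Nat.card_sum, slitCount_eq_card, slitCount_eq_card, slitCount_eq_card, slitCount_eq_card]
  ring

lemma slitCount_succ_H (hij : ((i,j) : ℤ×ℤ) ∈ slitH) :
    slitCount diagSteps i j (n+1) = 0 := by
  rw [slitCount_eq_card]
  have : IsEmpty (Wk ((i,j) : ℤ×ℤ) (n+1)) := by
    constructor
    rintro ⟨w, hw, hend⟩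
    exact hw.2.2 (Fin.last (n+1)) (by rw [Fin.val_last]; omega) (hend ▸ hij)
  exact Nat.card_of_isEmpty

end MainEquiv

section Final

variable (R16 : PowerSeries ℚ) (hR0 : constantCoeff (R := ℚ) R16 = 1) (hR : R16 ^ 2 = 1 - 16 * X ^ 2)

lemma iota1_algebraMap (r : ℚ) : iota1 (algebraMap ℚ Lam r) = algebraMap ℚ LL r := by
  rw [AddMonoidAlgebra.coe_algebraMap]
  show iota1 (AddMonoidAlgebra.single 0 (algebraMap ℚ ℚ r)) = _
  rw [iota1_single, AddMonoidAlgebra.coe_algebraMap]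
  rfl

lemma map_iota1_phiQ (f : PowerSeries ℚ) :
    PowerSeries.map iota1 (phiQ f) = PowerSeries.map (algebraMap ℚ LL) f := by
  ext n : 1
  rw [PowerSeries.coeff_map, phiQ_coeff, PowerSeries.coeff_map, iota1_algebraMap]

lemma L2 : (2 : LL) = AddMonoidAlgebra.single ((0,0) : ℤ×ℤ) (2:ℚ) := by
  rw [show (2 : LL) = ((2:ℕ) : LL) by norm_cast, AddMonoidAlgebra.natCast_def]
  norm_num
  rfl

lemma L8 : (8 : LL) = AddMonoidAlgebra.single ((0,0) : ℤ×ℤ) (8:ℚ) := by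
  rw [show (8 : LL) = ((8:ℕ) : LL) by norm_cast, AddMonoidAlgebra.natCast_def]
  norm_num
  rfl

include hR0 hR in
lemma final_algebra :
    2 * (Vbig R16) ^ 2
      = 1 - 8 * X ^ 2 * C (R := LL) (1 + AddMonoidAlgebra.single ((-2:ℤ), (0:ℤ)) (1:ℚ))
        + PowerSeries.map (algebraMap ℚ LL) R16 := by
  have h1 : (Vbig R16) ^ 2 = PowerSeries.map iota1 (F1 R16) := by
    rw [pow_two, Vbig, ← map_mul, V1_sq R16 hR0]
  rw [h1, F1, map_sub (PowerSeries.map iota1), map_iota1_phiQ]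
  have h2 : (2 : PowerSeries LL) * PowerSeries.map (algebraMap ℚ LL) (Aq R16)
      = 1 - 8 * X^2 + PowerSeries.map (algebraMap ℚ LL) R16 := by
    have := congrArg (PowerSeries.map (algebraMap ℚ LL)) (hA2 R16)
    rw [map_mul, map_ofNat, map_add, map_sub, map_one, map_mul, map_pow, map_ofNat,
      PowerSeries.map_X] at this
    exact this
  have h3 : PowerSeries.map iota1 (X^2 * C (R := Lam) (AddMonoidAlgebra.single (-2 : ℤ) (4:ℚ)))
      = X^2 * C (R := LL) (AddMonoidAlgebra.single ((-2:ℤ),(0:ℤ)) (4:ℚ)) := by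
    rw [map_mul, map_pow, PowerSeries.map_X, PowerSeries.map_C]
    rw [show iota1 (AddMonoidAlgebra.single (-2 : ℤ) (4:ℚ))
      = AddMonoidAlgebra.single ((-2:ℤ),(0:ℤ)) (4:ℚ) from iota1_single _ _]
  have h4 : (2 : PowerSeries LL) * C (R := LL) (AddMonoidAlgebra.single ((-2:ℤ),(0:ℤ)) (4:ℚ))
      = 8 * C (R := LL) (AddMonoidAlgebra.single ((-2:ℤ),(0:ℤ)) (1:ℚ)) := by
    rw [show (2 : PowerSeries LL) = C (R := LL) (2:LL) from (map_ofNat (C (R := LL)) 2).symm,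
      show (8 : PowerSeries LL) = C (R := LL) (8:LL) from (map_ofNat (C (R := LL)) 8).symm,
      ← map_mul, ← map_mul, L2, L8, AddMonoidAlgebra.single_mul_single,
      AddMonoidAlgebra.single_mul_single]
    norm_num
  rw [map_add (C (R := LL)), map_one]
  linear_combination h2 + (-(X^2))*h4 - 2*h3
end Final


/-- the complete generating function for walks on the slit plane with
diagonal steps satisfies `2·((1 − t(x+x⁻¹)(y+y⁻¹))·S)² = 1 − 8t²(1+x⁻²) + R₁₆`,
where `R₁₆² = 1 − 16t²`, `R₁₆(0) = 1`. Here `x^i y^j` is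
`AddMonoidAlgebra.single (i,j) 1` in `ℚ[x,x⁻¹,y,y⁻¹] = AddMonoidAlgebra ℚ (ℤ × ℤ)`. -/
theorem diag_slit_plane_complete_generating_function
    (S : PowerSeries (AddMonoidAlgebra ℚ (ℤ × ℤ)))
    (hS : ∀ (n : ℕ) (i j : ℤ),
      (PowerSeries.coeff (R := AddMonoidAlgebra ℚ (ℤ × ℤ)) n S).coeff (i, j)
        = (slitCount diagSteps i j n : ℚ))
    (R16 : PowerSeries ℚ)
    (hR0 : PowerSeries.constantCoeff (R := ℚ) R16 = 1)
    (hR : R16 ^ 2 = 1 - 16 * PowerSeries.X ^ 2) :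
    2 * ((1 - PowerSeries.X * PowerSeries.C (R := AddMonoidAlgebra ℚ (ℤ × ℤ))
          ((AddMonoidAlgebra.single ((1 : ℤ), (0 : ℤ)) (1 : ℚ)
              + AddMonoidAlgebra.single ((-1 : ℤ), (0 : ℤ)) (1 : ℚ))
            * (AddMonoidAlgebra.single ((0 : ℤ), (1 : ℤ)) (1 : ℚ)
              + AddMonoidAlgebra.single ((0 : ℤ), (-1 : ℤ)) (1 : ℚ)))) * S) ^ 2
      = 1 - 8 * PowerSeries.X ^ 2 * PowerSeries.C (R := AddMonoidAlgebra ℚ (ℤ × ℤ))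
              (1 + AddMonoidAlgebra.single ((-2 : ℤ), (0 : ℤ)) (1 : ℚ))
          + PowerSeries.map (algebraMap ℚ (AddMonoidAlgebra ℚ (ℤ × ℤ))) R16 := by
  have hSS : S = Sh R16 := by
    ext n : 1
    induction n with
    | zero =>
        refine AddMonoidAlgebra.ext (Finsupp.ext ?_)
        rintro ⟨a, b⟩
        rw [hS 0 a b, slitCount_zero, Sh_zero, AddMonoidAlgebra.one_def, AddMonoidAlgebra.coeff_single,
            Finsupp.single_apply]
        by_cases h : ((a,b) : ℤ×ℤ) = ((0:ℤ),(0:ℤ))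
        · rw [if_pos h, if_pos (show (0 : ℤ×ℤ) = (a,b) from by rw [h]; rfl)]
          norm_num
        · rw [if_neg h, if_neg (show ¬((0 : ℤ×ℤ) = (a,b)) from fun hh => h (by rw [← hh]; rfl))]
          norm_num
    | succ n ih =>
        refine AddMonoidAlgebra.ext (Finsupp.ext ?_)
        rintro ⟨a, b⟩
        by_cases hp : ((a,b) : ℤ×ℤ) ∈ slitH
        · rw [hS (n+1) a b, slitCount_succ_H a b n hp]
          have hb : b = 0 := hp.1
          subst hb
          rw [Sh_H_vanish R16 hR0 hR (n+1) (by omega) a hp.2]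
          norm_num
        · rw [hS (n+1) a b, slitCount_succ a b n hp, Sh_rec R16 n, AddMonoidAlgebra.coeff_add, Finsupp.add_apply,
            Vbig_off_H R16 (n+1) (a,b) hp, zero_add, pel_mul_apply, ← ih]
          rw [show ((a,b) : ℤ×ℤ) - ((1,1) : ℤ×ℤ) = ((a-1, b-1) : ℤ×ℤ) from Prod.mk_sub_mk .. ,
            show ((a,b) : ℤ×ℤ) - ((1,-1) : ℤ×ℤ) = ((a-1, b+1) : ℤ×ℤ) from by
              rw [Prod.mk_sub_mk]; norm_num,
            show ((a,b) : ℤ×ℤ) - ((-1,1) : ℤ×ℤ) = ((a+1, b-1) : ℤ×ℤ) from by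
              rw [Prod.mk_sub_mk]; norm_num,
            show ((a,b) : ℤ×ℤ) - ((-1,-1) : ℤ×ℤ) = ((a+1, b+1) : ℤ×ℤ) from by
              rw [Prod.mk_sub_mk]; norm_num]
          rw [hS n (a-1) (b-1), hS n (a-1) (b+1), hS n (a+1) (b-1), hS n (a+1) (b+1)]
          push_cast
          ring
  rw [hSS]
  have hker : (1 - PowerSeries.X * PowerSeries.C (R := AddMonoidAlgebra ℚ (ℤ × ℤ))
          ((AddMonoidAlgebra.single ((1 : ℤ), (0 : ℤ)) (1 : ℚ)
              + AddMonoidAlgebra.single ((-1 : ℤ), (0 : ℤ)) (1 : ℚ))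
            * (AddMonoidAlgebra.single ((0 : ℤ), (1 : ℤ)) (1 : ℚ)
              + AddMonoidAlgebra.single ((0 : ℤ), (-1 : ℤ)) (1 : ℚ)))) * Sh R16
      = Vbig R16 := Sh_kernel R16
  rw [hker]
  exact final_algebra R16 hR0 hR
end

section
/- (Factorization lemma.) Let δ(x;t) be a polynomial in t with coefficients in the Laurent polynomial ring ℝ[x,x⁻¹], such that δ(x;0) = 1. Then there exists a unique triple (D, Δ, Δ̄) of formal power series in t satisfying: δ = D·Δ·Δ̄ (as series in t with Laurent-polynomial coefficients); the coefficients of D lie in ℝ; the coefficients of Δ lie in ℝ[x]; the coefficients of Δ̄ lie in ℝ[x⁻¹]; and D(0) = 1, Δ(x;0) = Δ̄(x⁻¹;0) = 1, and the constant terms in x of Δ and of Δ̄ are both 1 (i.e. Δ(0;t) = Δ̄ evaluated at x⁻¹=0 equal 1). Moreover, Δ is a polynomial in x and Δ̄ is a polynomial in x⁻¹ (i.e. the degrees in x, resp. x⁻¹, of the coefficients are uniformly bounded). -/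
open PowerSeries

/-- The canonical factorization conditions of the factorization lemma:
`δ = D·Δ·Δ̄` (as power series in `t` with coefficients in `ℝ[x,x⁻¹]`), where
`D` has coefficients in `ℝ`, `Δ` has coefficients in `ℝ[x]` (embedded via `x ↦ T 1`),
`Δ̄` has coefficients in `ℝ[x⁻¹]` (embedded via `x⁻¹ ↦ T (-1)`), with the
normalizations `D(0) = 1`, `Δ(x;0) = Δ̄(x⁻¹;0) = 1`, `Δ(0;t) = Δ̄(0;t) = 1`. -/
def FactorCond (δ : Polynomial (LaurentPolynomial ℝ))
    (D : PowerSeries ℝ) (Δ : PowerSeries (Polynomial ℝ))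
    (Δb : PowerSeries (Polynomial ℝ)) : Prop :=
  (PowerSeries.mk fun n => δ.coeff n)
      = PowerSeries.map (algebraMap ℝ (LaurentPolynomial ℝ)) D
        * PowerSeries.map (Polynomial.toLaurent (R := ℝ)) Δ
        * PowerSeries.map
            ((Polynomial.aeval (LaurentPolynomial.T (-1)) :
              Polynomial ℝ →ₐ[ℝ] LaurentPolynomial ℝ) : Polynomial ℝ →+* LaurentPolynomial ℝ) Δb
    ∧ PowerSeries.constantCoeff (R := ℝ) D = 1
    ∧ PowerSeries.constantCoeff (R := Polynomial ℝ) Δ = 1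
    ∧ PowerSeries.constantCoeff (R := Polynomial ℝ) Δb = 1
    ∧ PowerSeries.map (Polynomial.constantCoeff (R := ℝ)) Δ = 1
    ∧ PowerSeries.map (Polynomial.constantCoeff (R := ℝ)) Δb = 1

namespace FactorizationAux

open Polynomial LaurentPolynomial Finset

noncomputable section

abbrev LL := LaurentPolynomial ℝ

def embR : Polynomial ℝ →+* LL :=
  ((Polynomial.aeval (LaurentPolynomial.T (-1)) : Polynomial ℝ →ₐ[ℝ] LL) : Polynomial ℝ →+* LL)

lemma embR_eq (q : Polynomial ℝ) : embR q = invert (toLaurent q) := by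
  have : (Polynomial.aeval (LaurentPolynomial.T (-1)) : Polynomial ℝ →ₐ[ℝ] LL)
      = (invert.toAlgHom.comp Polynomial.toLaurentAlg) := by
    apply Polynomial.algHom_ext
    simp [Polynomial.toLaurentAlg_apply]
  rw [embR, this]; rfl

lemma tl_coe (p : Polynomial ℝ) (n : ℕ) : (toLaurent p).coeff (n : ℤ) = p.coeff n := by
  rw [coeff_toLaurent]
  exact Finsupp.mapDomain_apply Nat.castEmbedding.injective _ _

lemma tl_neg (p : Polynomial ℝ) {k : ℤ} (hk : k < 0) : (toLaurent p).coeff k = 0 := by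
  rw [coeff_toLaurent]
  apply Finsupp.mapDomain_of_notMem_range
  rintro ⟨m, rfl⟩
  simp at hk
  omega

lemma emb_at (q : Polynomial ℝ) (k : ℤ) : (embR q).coeff k = (toLaurent q).coeff (-k) := by
  rw [embR_eq, invert_apply]

lemma trunc_at (f : LL) (n : ℕ) : (trunc f).coeff n = f.coeff n := rfl

/-- strictly positive part -/
def pp (f : LL) : Polynomial ℝ := trunc f - Polynomial.C (f.coeff 0)
/-- strictly negative part, as polynomial in x⁻¹ -/
def np (f : LL) : Polynomial ℝ := trunc (invert f) - Polynomial.C (f.coeff 0)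

lemma pp_coeff (f : LL) (n : ℕ) : (pp f).coeff n = if n = 0 then 0 else f.coeff n := by
  rw [pp, Polynomial.coeff_sub, trunc_at, Polynomial.coeff_C]
  split <;> simp_all

lemma np_coeff (f : LL) (n : ℕ) : (np f).coeff n = if n = 0 then 0 else f.coeff (-n) := by
  rw [np, Polynomial.coeff_sub, trunc_at, invert_apply, Polynomial.coeff_C]
  split <;> simp_all

lemma add_at (f g : LL) (k : ℤ) : (f + g).coeff k = f.coeff k + g.coeff k := rfl

lemma decomp (f : LL) :
    f = LaurentPolynomial.C (f.coeff 0) + toLaurent (pp f) + embR (np f) := by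
  ext a
  rw [add_at, add_at, emb_at, LaurentPolynomial.C_apply]
  rcases lt_trichotomy a 0 with h | rfl | h
  · rw [tl_neg _ h, if_neg h.ne]
    have h2 : -a = ((-a).toNat : ℤ) := by omega
    rw [h2, tl_coe, np_coeff, if_neg (by omega)]
    have h3 : -(((-a).toNat : ℤ)) = a := by omega
    rw [h3]; ring
  · rw [show (-0 : ℤ) = ((0:ℕ):ℤ) from rfl, show (0:ℤ) = ((0:ℕ):ℤ) from rfl,
      tl_coe, tl_coe, pp_coeff, np_coeff]
    simp
  · rw [if_neg h.ne', tl_neg (np f) (k := -a) (by omega)]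
    have h2 : a = (a.toNat : ℤ) := by omega
    rw [h2, tl_coe, pp_coeff, if_neg (by omega)]
    rw [← h2]; ring

lemma cz_retr (c : ℝ) (p q : Polynomial ℝ) (hp : p.coeff 0 = 0) (hq : q.coeff 0 = 0) :
    (LaurentPolynomial.C c + toLaurent p + embR q).coeff 0 = c := by
  rw [add_at, add_at, emb_at, LaurentPolynomial.C_apply, neg_zero]
  rw [show (0:ℤ) = ((0:ℕ):ℤ) by rfl, tl_coe, tl_coe, hp, hq]
  simp

lemma pp_retr (c : ℝ) (p q : Polynomial ℝ) (hp : p.coeff 0 = 0) (hq : q.coeff 0 = 0) :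
    pp (LaurentPolynomial.C c + toLaurent p + embR q) = p := by
  ext n
  rw [pp_coeff]
  rcases eq_or_ne n 0 with rfl | hn
  · rw [if_pos rfl, hp]
  · rw [if_neg hn, add_at, add_at, emb_at, LaurentPolynomial.C_apply, tl_coe,
      tl_neg _ (by omega : -(n:ℤ) < 0), if_neg (by exact_mod_cast hn)]
    ring

lemma np_retr (c : ℝ) (p q : Polynomial ℝ) (hp : p.coeff 0 = 0) (hq : q.coeff 0 = 0) :
    np (LaurentPolynomial.C c + toLaurent p + embR q) = q := by
  ext n
  rw [np_coeff]
  rcases eq_or_ne n 0 with rfl | hn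
  · rw [if_pos rfl, hq]
  · rw [if_neg hn, add_at, add_at, emb_at, neg_neg, LaurentPolynomial.C_apply, tl_coe,
      tl_neg _ (by omega : -(n:ℤ) < 0), if_neg (by omega)]
    ring

abbrev T3 := ℝ × Polynomial ℝ × Polynomial ℝ

def tm (v w u : T3) : LL := LaurentPolynomial.C v.1 * toLaurent w.2.1 * embR u.2.2

/-- full coefficient-of-tⁿ sum of the triple product -/
def Sfull (g : ℕ → T3) (n : ℕ) : LL :=
  ∑ p ∈ antidiagonal n, ∑ q ∈ antidiagonal p.2, tm (g p.1) (g q.1) (g q.2)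

/-- sum with the three `n`-indexed terms removed -/
def Sb (g : ℕ → T3) (n : ℕ) : LL :=
  ∑ p ∈ antidiagonal n, ∑ q ∈ antidiagonal p.2,
    if p.1 = n ∨ q.1 = n ∨ q.2 = n then 0 else tm (g p.1) (g q.1) (g q.2)

lemma split_sum (n : ℕ) (hn : n ≠ 0) (G : ℕ → ℕ → ℕ → LL) :
    ∑ p ∈ antidiagonal n, ∑ q ∈ antidiagonal p.2, G p.1 q.1 q.2
    = G n 0 0 + G 0 n 0 + G 0 0 n
      + ∑ p ∈ antidiagonal n, ∑ q ∈ antidiagonal p.2,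
          if p.1 = n ∨ q.1 = n ∨ q.2 = n then 0 else G p.1 q.1 q.2 := by
  have key : ∑ p ∈ antidiagonal n, ∑ q ∈ antidiagonal p.2,
      (if p.1 = n ∨ q.1 = n ∨ q.2 = n then G p.1 q.1 q.2 else 0)
      = G n 0 0 + (G 0 n 0 + G 0 0 n) := by
    rw [Finset.sum_eq_add_of_mem (n, 0) (0, n) (by simp) (by simp) (by simp [hn]) ?_]
    · congr 1
      · rw [show (antidiagonal (n,0).2) = antidiagonal 0 from rfl]
        simp
      · rw [show (antidiagonal (0,n).2) = antidiagonal n from rfl]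
        rw [Finset.sum_eq_add_of_mem (n, 0) (0, n) (by simp) (by simp) (by simp [hn]) ?_]
        · simp [hn]
        · rintro ⟨a, b⟩ hab ⟨h1, h2⟩
          rw [Finset.HasAntidiagonal.mem_antidiagonal] at hab
          have ha : a ≠ n := fun h => h1 (by simp [Prod.ext_iff]; omega)
          have hb : b ≠ n := fun h => h2 (by simp [Prod.ext_iff]; omega)
          simp [hn, Ne.symm hn, ha, hb]
    · rintro ⟨a, b⟩ hab ⟨h1, h2⟩
      rw [Finset.HasAntidiagonal.mem_antidiagonal] at hab
      have ha : a ≠ n := fun h => h1 (by simp [Prod.ext_iff]; omega)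
      have hb : b ≠ n := by intro h; apply h2; simp [Prod.ext_iff]; omega
      apply Finset.sum_eq_zero
      rintro ⟨c, d⟩ hcd
      rw [Finset.HasAntidiagonal.mem_antidiagonal] at hcd
      have hc : c ≠ n := by omega
      have hd : d ≠ n := by omega
      simp [ha, hc, hd]
  calc ∑ p ∈ antidiagonal n, ∑ q ∈ antidiagonal p.2, G p.1 q.1 q.2
      = ∑ p ∈ antidiagonal n, ∑ q ∈ antidiagonal p.2,
          ((if p.1 = n ∨ q.1 = n ∨ q.2 = n then G p.1 q.1 q.2 else 0)
          + (if p.1 = n ∨ q.1 = n ∨ q.2 = n then 0 else G p.1 q.1 q.2)) := by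
        apply Finset.sum_congr rfl; intro p _; apply Finset.sum_congr rfl; intro q _
        split <;> simp
    _ = _ := by
        simp only [Finset.sum_add_distrib, key]; ring

lemma Sfull_split {g : ℕ → T3} (h0 : g 0 = (1,1,1)) {n : ℕ} (hn : n ≠ 0) :
    Sfull g n = LaurentPolynomial.C (g n).1 + toLaurent (g n).2.1 + embR (g n).2.2 + Sb g n := by
  have key := split_sum n hn (fun a b c => tm (g a) (g b) (g c))
  beta_reduce at key
  rw [Sfull, key, ← Sb, tm, tm, tm, h0]
  simp

lemma Sb_congr {g g' : ℕ → T3} {n : ℕ} (h : ∀ m, m < n → g m = g' m) :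
    Sb g n = Sb g' n := by
  apply Finset.sum_congr rfl
  rintro ⟨a, b⟩ hab
  apply Finset.sum_congr rfl
  rintro ⟨c, d⟩ hcd
  rw [Finset.HasAntidiagonal.mem_antidiagonal] at hab hcd
  by_cases hc : a = n ∨ c = n ∨ d = n
  · simp [hc]
  · push_neg at hc
    rw [if_neg (by tauto), if_neg (by tauto),
      h a (by omega), h c (by omega), h d (by omega)]

def tri (δ : Polynomial LL) : ℕ → T3 :=
  WellFounded.fix (Nat.lt_wfRel.wf) fun n ih =>
    if _h : n = 0 then (1, 1, 1)
    else
      let r : LL := δ.coeff n - Sb (fun m => if hm : m < n then ih m hm else (1, 1, 1)) n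
      (r.coeff 0, pp r, np r)

lemma tri_zero (δ : Polynomial LL) : tri δ 0 = (1, 1, 1) := by
  rw [tri, WellFounded.fix_eq]
  simp

lemma tri_succ (δ : Polynomial LL) (n : ℕ) (hn : n ≠ 0) :
    tri δ n = ((δ.coeff n - Sb (tri δ) n).coeff 0,
      pp (δ.coeff n - Sb (tri δ) n), np (δ.coeff n - Sb (tri δ) n)) := by
  conv_lhs => rw [tri, WellFounded.fix_eq]
  simp only [hn, dif_neg, if_neg]
  have : Sb (fun m => if hm : m < n then tri δ m else (1, 1, 1)) n = Sb (tri δ) n := by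
    apply Sb_congr
    intro m hm
    simp [hm]
  rw [← tri, this]
  simp

/-- The abstract characterization of a valid factorization, coefficientwise. -/
def Good (δ : Polynomial LL) (g : ℕ → T3) : Prop :=
  g 0 = (1, 1, 1)
  ∧ (∀ n, n ≠ 0 → (g n).2.1.coeff 0 = 0 ∧ (g n).2.2.coeff 0 = 0)
  ∧ ∀ n, δ.coeff n = Sfull g n

lemma good_eq_tri {δ : Polynomial LL} {g : ℕ → T3} (hg : Good δ g) : g = tri δ := by
  obtain ⟨h0, hc, hS⟩ := hg
  funext n
  induction n using Nat.strong_induction_on with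
  | _ n ih =>
    rcases eq_or_ne n 0 with rfl | hn
    · rw [h0, tri_zero]
    · have hSb : Sb g n = Sb (tri δ) n := Sb_congr ih
      have heq : LaurentPolynomial.C (g n).1 + toLaurent (g n).2.1 + embR (g n).2.2
          = δ.coeff n - Sb (tri δ) n := by
        rw [← hSb, hS n, Sfull_split h0 hn]; ring
      obtain ⟨hc1, hc2⟩ := hc n hn
      have e1 := cz_retr (g n).1 _ _ hc1 hc2
      have e2 := pp_retr (g n).1 _ _ hc1 hc2
      have e3 := np_retr (g n).1 _ _ hc1 hc2
      rw [heq] at e1 e2 e3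
      rw [tri_succ δ n hn, e1, e2, e3]

lemma good_tri {δ : Polynomial LL} (hδ : δ.coeff 0 = 1) : Good δ (tri δ) := by
  refine ⟨tri_zero δ, fun n hn => ?_, fun n => ?_⟩
  · rw [tri_succ δ n hn]
    constructor
    · rw [pp_coeff]; simp
    · rw [np_coeff]; simp
  · rcases eq_or_ne n 0 with rfl | hn
    · rw [hδ, Sfull]
      simp only [Finset.Nat.antidiagonal_zero, Finset.sum_singleton]
      rw [tm, tri_zero]
      simp
    · rw [Sfull_split (tri_zero δ) hn, tri_succ δ n hn]
      dsimp only
      rw [← decomp (δ.coeff n - Sb (tri δ) n)]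
      ring

def gOf (D : PowerSeries ℝ) (Δ Δb : PowerSeries (Polynomial ℝ)) : ℕ → T3 :=
  fun n => (PowerSeries.coeff (R := ℝ) n D, PowerSeries.coeff n Δ, PowerSeries.coeff n Δb)

lemma coeff_prod_eq (D : PowerSeries ℝ) (Δ Δb : PowerSeries (Polynomial ℝ)) (n : ℕ) :
    (PowerSeries.coeff (R := LL) n) (PowerSeries.map (algebraMap ℝ LL) D
      * PowerSeries.map (Polynomial.toLaurent (R := ℝ)) Δ
      * PowerSeries.map embR Δb) = Sfull (gOf D Δ Δb) n := by
  rw [mul_assoc, PowerSeries.coeff_mul]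
  unfold Sfull tm gOf
  apply Finset.sum_congr rfl
  intro p _
  rw [PowerSeries.coeff_mul, Finset.mul_sum]
  apply Finset.sum_congr rfl
  intro q _
  dsimp only
  rw [PowerSeries.coeff_map, PowerSeries.coeff_map, PowerSeries.coeff_map,
    LaurentPolynomial.C_eq_algebraMap]
  ring

lemma fc_iff (δ : Polynomial LL) (D : PowerSeries ℝ) (Δ Δb : PowerSeries (Polynomial ℝ)) :
    FactorCond δ D Δ Δb ↔ Good δ (gOf D Δ Δb) := by
  have hemb : PowerSeries.map
      ((Polynomial.aeval (LaurentPolynomial.T (-1)) :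
        Polynomial ℝ →ₐ[ℝ] LaurentPolynomial ℝ) : Polynomial ℝ →+* LaurentPolynomial ℝ) Δb
      = PowerSeries.map embR Δb := rfl
  rw [FactorCond, hemb]
  constructor
  · rintro ⟨h1, h2, h3, h4, h5, h6⟩
    refine ⟨?_, fun n hn => ?_, fun n => ?_⟩
    · simp only [gOf, PowerSeries.coeff_zero_eq_constantCoeff, h2, h3, h4]
    · constructor
      · have := congrArg (PowerSeries.coeff (R := ℝ) n) h5
        rw [PowerSeries.coeff_map, PowerSeries.coeff_one, if_neg hn] at this
        exact this
      · have := congrArg (PowerSeries.coeff (R := ℝ) n) h6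
        rw [PowerSeries.coeff_map, PowerSeries.coeff_one, if_neg hn] at this
        exact this
    · have := congrArg (PowerSeries.coeff (R := LL) n) h1
      rw [PowerSeries.coeff_mk, coeff_prod_eq] at this
      exact this
  · rintro ⟨h0, hc, hS⟩
    have h01 : PowerSeries.coeff (R := ℝ) 0 D = 1 := congrArg Prod.fst h0
    have h02 : PowerSeries.coeff (R := Polynomial ℝ) 0 Δ = 1 := congrArg (Prod.fst ∘ Prod.snd) h0
    have h03 : PowerSeries.coeff (R := Polynomial ℝ) 0 Δb = 1 := congrArg (Prod.snd ∘ Prod.snd) h0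
    refine ⟨?_, ?_, ?_, ?_, ?_, ?_⟩
    · apply PowerSeries.ext
      intro n
      rw [PowerSeries.coeff_mk, coeff_prod_eq]
      exact hS n
    · rw [← PowerSeries.coeff_zero_eq_constantCoeff]; exact h01
    · rw [← PowerSeries.coeff_zero_eq_constantCoeff]; exact h02
    · rw [← PowerSeries.coeff_zero_eq_constantCoeff]; exact h03
    · ext n
      rw [PowerSeries.coeff_map, PowerSeries.coeff_one]
      rcases eq_or_ne n 0 with rfl | hn
      · rw [if_pos rfl, h02]; simp
      · rw [if_neg hn]
        exact (hc n hn).1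
    · ext n
      rw [PowerSeries.coeff_map, PowerSeries.coeff_one]
      rcases eq_or_ne n 0 with rfl | hn
      · rw [if_pos rfl, h03]; simp
      · rw [if_neg hn]
        exact (hc n hn).2

lemma existsUnique_fc (δ : Polynomial LL) (hδ : δ.coeff 0 = 1) :
    ∃! p : PowerSeries ℝ × PowerSeries (Polynomial ℝ) × PowerSeries (Polynomial ℝ),
        FactorCond δ p.1 p.2.1 p.2.2 := by
  refine ⟨(PowerSeries.mk fun n => (tri δ n).1, PowerSeries.mk fun n => (tri δ n).2.1,
    PowerSeries.mk fun n => (tri δ n).2.2), ?_, ?_⟩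
  · dsimp only
    rw [fc_iff]
    have : gOf (PowerSeries.mk fun n => (tri δ n).1) (PowerSeries.mk fun n => (tri δ n).2.1)
        (PowerSeries.mk fun n => (tri δ n).2.2) = tri δ := by
      funext n
      simp [gOf, PowerSeries.coeff_mk]
    rw [this]
    exact good_tri hδ
  · rintro ⟨D, Δ, Δb⟩ h
    have hg : gOf D Δ Δb = tri δ := good_eq_tri ((fc_iff δ D Δ Δb).1 h)
    have h1 : ∀ n, PowerSeries.coeff (R := ℝ) n D = (tri δ n).1 :=
      fun n => congrArg Prod.fst (congrFun hg n)
    have h2 : ∀ n, PowerSeries.coeff (R := Polynomial ℝ) n Δ = (tri δ n).2.1 :=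
      fun n => congrArg (Prod.fst ∘ Prod.snd) (congrFun hg n)
    have h3 : ∀ n, PowerSeries.coeff (R := Polynomial ℝ) n Δb = (tri δ n).2.2 :=
      fun n => congrArg (Prod.snd ∘ Prod.snd) (congrFun hg n)
    refine Prod.ext ?_ (Prod.ext ?_ ?_)
    · apply PowerSeries.ext; intro n; rw [h1 n, PowerSeries.coeff_mk]
    · apply PowerSeries.ext; intro n; rw [h2 n, PowerSeries.coeff_mk]
    · apply PowerSeries.ext; intro n; rw [h3 n, PowerSeries.coeff_mk]

/-! ### Degree bounds -/

open Pointwise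

def bigS (δ : Polynomial LL) : Finset ℤ := δ.support.sup fun n => (δ.coeff n).coeff.support

lemma mem_bigS {δ : Polynomial LL} {n : ℕ} {k : ℤ} (h : (δ.coeff n).coeff k ≠ 0) : k ∈ bigS δ := by
  have h1 : δ.coeff n ≠ 0 := fun h0 => h (by rw [h0]; rfl)
  exact Finset.le_sup (f := fun n => (δ.coeff n).coeff.support)
    (Polynomial.mem_support_iff.2 h1) (Finsupp.mem_support_iff.2 h)

def Mδ (δ : Polynomial LL) : ℕ := (bigS δ).sup fun k => k.toNat
def Nδ (δ : Polynomial LL) : ℕ := (bigS δ).sup fun k => (-k).toNat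

lemma coeff_high {δ : Polynomial LL} (n : ℕ) {k : ℤ} (h : (Mδ δ : ℤ) < k) : (δ.coeff n).coeff k = 0 := by
  by_contra h0
  have := Finset.le_sup (f := fun k : ℤ => k.toNat) (mem_bigS h0)
  simp only [Mδ] at h
  omega

lemma coeff_low {δ : Polynomial LL} (n : ℕ) {k : ℤ} (h : k < -(Nδ δ : ℤ)) : (δ.coeff n).coeff k = 0 := by
  by_contra h0
  have := Finset.le_sup (f := fun k : ℤ => (-k).toNat) (mem_bigS h0)
  simp only [Nδ] at h
  omega

lemma supp_tl {p : Polynomial ℝ} {k : ℤ} (h : (toLaurent p).coeff k ≠ 0) :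
    0 ≤ k ∧ k ≤ p.natDegree := by
  rcases lt_or_ge k 0 with hk | hk
  · exact absurd (tl_neg p hk) h
  · refine ⟨hk, ?_⟩
    have h2 : k = (k.toNat : ℤ) := by omega
    rw [h2, tl_coe] at h
    have := Polynomial.le_natDegree_of_ne_zero h
    omega

lemma supp_C {c : ℝ} {k : ℤ} (h : (LaurentPolynomial.C c).coeff k ≠ 0) : k = 0 := by
  rw [LaurentPolynomial.C_apply] at h
  by_contra h0
  exact h (if_neg h0)

lemma tm_bound {v w u : T3} {k : ℤ} (h : (tm v w u).coeff k ≠ 0) :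
    -(u.2.2.natDegree : ℤ) ≤ k ∧ k ≤ (w.2.1.natDegree : ℤ) := by
  have hk : k ∈ (tm v w u).coeff.support := Finsupp.mem_support_iff.2 h
  have hs1 := AddMonoidAlgebra.support_coeff_mul_subset (LaurentPolynomial.C v.1 * toLaurent w.2.1) (embR u.2.2)
  have hk2 := hs1 hk
  rw [Finset.mem_add] at hk2
  obtain ⟨y, hy, z, hz, hyz⟩ := hk2
  have hs2 := AddMonoidAlgebra.support_coeff_mul_subset (LaurentPolynomial.C v.1) (toLaurent w.2.1)
  have hy2 := hs2 hy
  rw [Finset.mem_add] at hy2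
  obtain ⟨y1, hy1, y2, hy2, hy12⟩ := hy2
  have e1 : y1 = 0 := supp_C (Finsupp.mem_support_iff.1 hy1)
  have e2 := supp_tl (Finsupp.mem_support_iff.1 hy2)
  have hzv : (embR u.2.2).coeff z ≠ 0 := Finsupp.mem_support_iff.1 hz
  rw [emb_at] at hzv
  have e3 := supp_tl hzv
  omega

lemma sub_at (f g : LL) (k : ℤ) : (f - g).coeff k = f.coeff k - g.coeff k := rfl

lemma Sb_at (g : ℕ → T3) (n : ℕ) (k : ℤ) :
    (Sb g n).coeff k = ∑ p ∈ antidiagonal n, ∑ q ∈ antidiagonal p.2,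
      (if p.1 = n ∨ q.1 = n ∨ q.2 = n then 0 else tm (g p.1) (g q.1) (g q.2)).coeff k := by
  rw [Sb, AddMonoidAlgebra.coeff_sum, Finset.sum_apply']
  apply Finset.sum_congr rfl
  intro p _
  rw [AddMonoidAlgebra.coeff_sum, Finset.sum_apply']

lemma tri_deg (δ : Polynomial LL) (n : ℕ) :
    (tri δ n).2.1.natDegree ≤ Mδ δ ∧ (tri δ n).2.2.natDegree ≤ Nδ δ := by
  induction n using Nat.strong_induction_on with
  | _ n ih =>
    rcases eq_or_ne n 0 with rfl | hn
    · rw [tri_zero]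
      simp
    · have hSbH : ∀ k : ℤ, (Mδ δ : ℤ) < k → (Sb (tri δ) n).coeff k = 0 := by
        intro k hk
        rw [Sb_at]
        apply Finset.sum_eq_zero
        rintro ⟨a, b⟩ hab
        apply Finset.sum_eq_zero
        rintro ⟨c, d⟩ hcd
        rw [Finset.HasAntidiagonal.mem_antidiagonal] at hab hcd
        by_cases hg : a = n ∨ c = n ∨ d = n
        · rw [if_pos hg]; rfl
        · rw [if_neg hg]
          push_neg at hg
          by_contra h0
          have hb := (tm_bound h0).2
          dsimp only at hb
          have hcn : c < n := by omega
          have := (ih c hcn).1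
          omega
      have hSbL : ∀ k : ℤ, k < -(Nδ δ : ℤ) → (Sb (tri δ) n).coeff k = 0 := by
        intro k hk
        rw [Sb_at]
        apply Finset.sum_eq_zero
        rintro ⟨a, b⟩ hab
        apply Finset.sum_eq_zero
        rintro ⟨c, d⟩ hcd
        rw [Finset.HasAntidiagonal.mem_antidiagonal] at hab hcd
        by_cases hg : a = n ∨ c = n ∨ d = n
        · rw [if_pos hg]; rfl
        · rw [if_neg hg]
          push_neg at hg
          by_contra h0
          have hb := (tm_bound h0).1
          dsimp only at hb
          have hdn : d < n := by omega
          have := (ih d hdn).2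
          omega
      rw [tri_succ δ n hn]
      constructor
      · dsimp only
        rw [Polynomial.natDegree_le_iff_coeff_eq_zero]
        intro m hm
        rw [pp_coeff, if_neg (by omega), sub_at, coeff_high n (by exact_mod_cast hm),
          hSbH m (by exact_mod_cast hm)]
        ring
      · dsimp only
        rw [Polynomial.natDegree_le_iff_coeff_eq_zero]
        intro m hm
        rw [np_coeff, if_neg (by omega), sub_at, coeff_low n (by omega),
          hSbL (-(m:ℤ)) (by omega)]
        ring

end

end FactorizationAux

open FactorizationAux in
/-- the factorization lemma: any polynomial `δ(x;t)` in `t` with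
coefficients in `ℝ[x,x⁻¹]` and `δ(x;0) = 1` admits a unique canonical factorization
`δ = D·Δ·Δ̄`; moreover the factors `Δ`, `Δ̄` are polynomials in `x` (resp. `x⁻¹`),
i.e. have uniformly bounded degrees. -/
theorem factorization_lemma (δ : Polynomial (LaurentPolynomial ℝ)) (hδ : δ.coeff 0 = 1) :
    (∃! p : PowerSeries ℝ × PowerSeries (Polynomial ℝ) × PowerSeries (Polynomial ℝ),
        FactorCond δ p.1 p.2.1 p.2.2)
    ∧ ∀ D Δ Δb, FactorCond δ D Δ Δb →
        (∃ N : ℕ, ∀ n : ℕ, (PowerSeries.coeff (R := Polynomial ℝ) n Δ).natDegree ≤ N)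
        ∧ (∃ N : ℕ, ∀ n : ℕ, (PowerSeries.coeff (R := Polynomial ℝ) n Δb).natDegree ≤ N) := by
  refine ⟨existsUnique_fc δ hδ, fun D Δ Δb h => ?_⟩
  have hg : gOf D Δ Δb = tri δ := good_eq_tri ((fc_iff δ D Δ Δb).1 h)
  have h2 : ∀ n, PowerSeries.coeff (R := Polynomial ℝ) n Δ = (tri δ n).2.1 :=
    fun n => congrArg (Prod.fst ∘ Prod.snd) (congrFun hg n)
  have h3 : ∀ n, PowerSeries.coeff (R := Polynomial ℝ) n Δb = (tri δ n).2.2 :=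
    fun n => congrArg (Prod.snd ∘ Prod.snd) (congrFun hg n)
  constructor
  · exact ⟨Mδ δ, fun n => by rw [h2 n]; exact (tri_deg δ n).1⟩
  · exact ⟨Nδ δ, fun n => by rw [h3 n]; exact (tri_deg δ n).2⟩
end
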